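/- arXiv:1906.12304 — 4 statements merged into one kernel-verified Lean document; each statement's English description precedes it below -/
import Mathlib

section
/- Suppose Assumption (A3) holds (the graph G_κ is connected for some κ > 0). Then the true system Γ_k(W) = 1 for k = 1,…,K has a unique solution W* = (W*_1,…,W*_K) ∈ (0,∞)^K satisfying the normalization W*_K = 1. -/
open MeasureTheory ProbabilityTheory Real Finset
open scoped ENNReal NNReal

noncomputable section

namespace SelBias

variable {Z : Type*} [MeasurableSpace Z]

/-- Empirical distribution of the `nk` points `X 0, …, X (nk-1)`. -/
def empDist (nk : ℕ) (X : ℕ → Z) : Measure Z :=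
  (nk : ℝ≥0∞)⁻¹ • ∑ i ∈ Finset.range nk, Measure.dirac (X i)

/-- Pooled empirical distribution `P̃_n = ∑_k (n_k/n) P̂_k`. -/
def pooledDist {K : ℕ} (nv : Fin K → ℕ) (X : Fin K → ℕ → Z) : Measure Z :=
  ∑ k : Fin K, ((nv k : ℝ≥0∞) / ((∑ j : Fin K, nv j : ℕ) : ℝ≥0∞)) • empDist (nv k) (X k)

/-- The functional `Γ_k(W)` associated with weights `lam` and measure `μ`. -/
def Gam {K : ℕ} (ω : Fin K → Z → ℝ) (lam : Fin K → ℝ) (μ : Measure Z)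
    (W : Fin K → ℝ) (k : Fin K) : ℝ :=
  (W k)⁻¹ * ∫ z, ω k z / (∑ l : Fin K, lam l / W l * ω l z) ∂μ

/-- `W` is a positive solution of the system `Γ_k(W) = 1`, normalized by `W_K = 1`. -/
def IsSol {K : ℕ} (hK : 0 < K) (ω : Fin K → Z → ℝ) (lam : Fin K → ℝ) (μ : Measure Z)
    (W : Fin K → ℝ) : Prop :=
  (∀ k, 0 < W k) ∧ W ⟨K - 1, Nat.sub_lt hK one_pos⟩ = 1 ∧ ∀ k, Gam ω lam μ W k = 1

/-- The normalizing constants `Ω_k = ∫ ω_k dP`. -/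
def Om {K : ℕ} (ω : Fin K → Z → ℝ) (P : Measure Z) (k : Fin K) : ℝ := ∫ z, ω k z ∂P

/-- The biased distribution `P_k = (ω_k/Ω_k)·P`. -/
def Pk {K : ℕ} (ω : Fin K → Z → ℝ) (P : Measure Z) (k : Fin K) : Measure Z :=
  P.withDensity fun z => ENNReal.ofReal (ω k z / Om ω P k)

/-- The mixture `P̄ = ∑_k λ_k P_k`. -/
def Pbar {K : ℕ} (ω : Fin K → Z → ℝ) (P : Measure Z) (lam : Fin K → ℝ) : Measure Z :=
  ∑ k : Fin K, ENNReal.ofReal (lam k) • Pk ω P k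

/-- The estimated normalizing constants built from a solution `W`. -/
def OmHat {K : ℕ} (ω : Fin K → Z → ℝ) (lamhat : Fin K → ℝ) (μ : Measure Z)
    (W : Fin K → ℝ) (l : Fin K) : ℝ :=
  W l / ∫ z, (∑ k : Fin K, lamhat k * ω k z / W k)⁻¹ ∂μ

/-- The (debiased) risk functional. -/
def risk {K : ℕ} {Θ : Type*} (ω : Fin K → Z → ℝ) (lamhat : Fin K → ℝ) (μ : Measure Z)
    (Ωh : Fin K → ℝ) (ψ : Z → Θ → ℝ) (θ : Θ) : ℝ :=
  ∫ z, (∑ k : Fin K, lamhat k * ω k z / Ωh k)⁻¹ * ψ z θ ∂μ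

/-- The graph `G_κ`: `k ∼ l` iff `∫ ω_k ω_l dP ≥ κ`. -/
def biasGraph {K : ℕ} (ω : Fin K → Z → ℝ) (P : Measure Z) (κ : ℝ) : SimpleGraph (Fin K) where
  Adj k l := k ≠ l ∧ κ ≤ ∫ z, ω k z * ω l z ∂P
  symm := ⟨fun k l h => ⟨h.1.symm, by simpa [mul_comm] using h.2⟩⟩
  loopless := ⟨fun k h => h.1 rfl⟩

/-- Euclidean norm on `ℝ^K`. -/
def eNorm {K : ℕ} (v : Fin K → ℝ) : ℝ := Real.sqrt (∑ k, v k ^ 2)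

/-- The gradient `D'(u)` of the convex criterion, w.r.t. weights `lam` and measure `μ`. -/
def Dp {K : ℕ} (ω : Fin K → Z → ℝ) (lam : Fin K → ℝ) (μ : Measure Z)
    (u : Fin K → ℝ) (l : Fin K) : ℝ :=
  (∫ z, Real.exp (u l) * ω l z / (∑ k : Fin K, Real.exp (u k) * ω k z) ∂μ) - lam l

/-- The Hessian `D''(u)` of the convex criterion w.r.t. measure `μ`. -/
def Hess {K : ℕ} (ω : Fin K → Z → ℝ) (μ : Measure Z) (u : Fin K → ℝ) (l l' : Fin K) : ℝ :=
  ∫ z, ((if l = l' then Real.exp (u l) * ω l z / (∑ k : Fin K, Real.exp (u k) * ω k z) else 0)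
      - Real.exp (u l) * ω l z * (Real.exp (u l') * ω l' z)
        / (∑ k : Fin K, Real.exp (u k) * ω k z) ^ 2) ∂μ


section Aux

lemma walk_boundary {V : Type*} {G : SimpleGraph V} {S : Set V} :
    ∀ {a b : V}, G.Walk a b → a ∈ S → b ∉ S → ∃ x y, x ∈ S ∧ y ∉ S ∧ G.Adj x y := by
  intro a b w
  induction w with
  | nil => intro ha hb; exact absurd ha hb
  | @cons u v c h p ih =>
      intro ha hb
      by_cases hv : v ∈ S
      · exact ih hv hb
      · exact ⟨u, v, ha, hv, h⟩

variable {K : ℕ} (P : Measure Z) [IsProbabilityMeasure P] (ω : Fin K → Z → ℝ)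

lemma integrable_Pk (hωnn : ∀ k z, 0 ≤ ω k z)
    (hωint : ∀ k, Integrable (ω k) P) (hOmpos : ∀ k, 0 < Om ω P k) (k : Fin K)
    {f : Z → ℝ} (hf : Measurable f) {C : ℝ} (hC : ∀ z, |f z| ≤ C) :
    Integrable f (Pk ω P k) := by
  haveI hfin : IsFiniteMeasure (Pk ω P k) := by
    refine isFiniteMeasure_withDensity ?_
    rw [← ofReal_integral_eq_lintegral_ofReal ((hωint k).div_const _)
      (Filter.Eventually.of_forall fun z => div_nonneg (hωnn k z) (hOmpos k).le)]
    exact ENNReal.ofReal_ne_top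
  exact ⟨hf.aestronglyMeasurable, HasFiniteIntegral.of_bounded (C := C)
    (Filter.Eventually.of_forall fun z => by simpa [Real.norm_eq_abs] using hC z)⟩

lemma integral_Pk (hωmeas : ∀ k, Measurable (ω k)) (hωnn : ∀ k z, 0 ≤ ω k z)
    (hOmpos : ∀ k, 0 < Om ω P k) (k : Fin K) (f : Z → ℝ) :
    ∫ z, f z ∂(Pk ω P k) = ∫ z, f z * (ω k z / Om ω P k) ∂P := by
  have hm : Measurable fun z => (ω k z / Om ω P k).toNNReal :=
    ((hωmeas k).div_const _).real_toNNReal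
  have heq : Pk ω P k
      = P.withDensity fun z => (((ω k z / Om ω P k).toNNReal : ℝ≥0) : ℝ≥0∞) := rfl
  rw [heq, integral_withDensity_eq_integral_smul hm]
  refine integral_congr_ae (Filter.Eventually.of_forall fun z => ?_)
  show (ω k z / Om ω P k).toNNReal • f z = f z * (ω k z / Om ω P k)
  rw [NNReal.smul_def, smul_eq_mul,
    Real.coe_toNNReal _ (div_nonneg (hωnn k z) (hOmpos k).le), mul_comm]

lemma integral_Pbar (lam : Fin K → ℝ) (hlp : ∀ k, 0 < lam k)
    (hωmeas : ∀ k, Measurable (ω k)) (hωnn : ∀ k z, 0 ≤ ω k z)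
    (hωint : ∀ k, Integrable (ω k) P) (hOmpos : ∀ k, 0 < Om ω P k)
    {f : Z → ℝ} (hf : Measurable f) {C : ℝ} (hC : ∀ z, |f z| ≤ C) :
    ∫ z, f z ∂(Pbar ω P lam)
      = ∫ z, f z * (∑ l, lam l * (ω l z / Om ω P l)) ∂P := by
  have hint : ∀ k : Fin K, Integrable f (Pk ω P k) :=
    fun k => integrable_Pk P ω hωnn hωint hOmpos k hf hC
  rw [Pbar, integral_finset_sum_measure
    (fun k _ => (hint k).smul_measure ENNReal.ofReal_ne_top)]
  have h1 : ∀ k : Fin K, ∫ z, f z ∂(ENNReal.ofReal (lam k) • Pk ω P k)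
      = lam k * ∫ z, f z * (ω k z / Om ω P k) ∂P := by
    intro k
    rw [integral_smul_measure, ENNReal.toReal_ofReal (hlp k).le, smul_eq_mul,
      integral_Pk P ω hωmeas hωnn hOmpos k f]
  simp_rw [h1]
  have hIl : ∀ l : Fin K, Integrable (fun z => f z * (ω l z / Om ω P l)) P :=
    fun l => ((hωint l).div_const _).bdd_mul hf.aestronglyMeasurable
      (c := C) (Filter.Eventually.of_forall fun z => by simpa [Real.norm_eq_abs] using hC z)
  have h2 : (fun z => f z * (∑ l, lam l * (ω l z / Om ω P l)))
      = fun z => ∑ l, lam l * (f z * (ω l z / Om ω P l)) := by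
    funext z; rw [Finset.mul_sum]; exact Finset.sum_congr rfl fun l _ => by ring
  rw [h2, integral_finset_sum _ (fun l _ => (hIl l).const_mul _)]
  exact Finset.sum_congr rfl fun l _ => (integral_const_mul _ _).symm

end Aux

/-- Under connectivity of `G_κ`, the true system `Γ_k(W) = 1` has a unique
positive solution normalized by `W_K = 1`. -/
theorem true_system_unique_solution
    {q : ℕ} {Zs : Set (EuclideanSpace ℝ (Fin q))} (hZs : MeasurableSet Zs)
    {K : ℕ} (hK : 0 < K)
    (P : Measure ↥Zs) [IsProbabilityMeasure P]
    (ω : Fin K → ↥Zs → ℝ)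
    (hωmeas : ∀ k, Measurable (ω k)) (hωnn : ∀ k z, 0 ≤ ω k z)
    (hωint : ∀ k, Integrable (ω k) P)
    (hOmpos : ∀ k, 0 < Om ω P k)
    (lam : Fin K → ℝ) (hlam : ∀ k, lam k ∈ Set.Ioo (0:ℝ) 1) (hlamsum : ∑ k, lam k = 1)
    (κ : ℝ) (hκ : 0 < κ) (hconn : (biasGraph ω P κ).Connected)
    :
    ∃! W : Fin K → ℝ, IsSol hK ω lam (Pbar ω P lam) W := by
  classical
  set KL : Fin K := ⟨K - 1, Nat.sub_lt hK one_pos⟩ with hKL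
  have hlp : ∀ k, 0 < lam k := fun k => (hlam k).1
  set s : ↥Zs → ℝ := fun z => ∑ l, lam l * (ω l z / Om ω P l) with hs
  have hterm : ∀ (k : Fin K) (z), lam k * (ω k z / Om ω P k) ≤ s z := fun k z =>
    Finset.single_le_sum
      (fun l _ => mul_nonneg (hlp l).le (div_nonneg (hωnn l z) (hOmpos l).le))
      (Finset.mem_univ k)
  have hs_nonneg : ∀ z, 0 ≤ s z := fun z =>
    Finset.sum_nonneg fun l _ =>
      mul_nonneg (hlp l).le (div_nonneg (hωnn l z) (hOmpos l).le)
  have hszero : ∀ z, s z = 0 → ∀ k, ω k z = 0 := by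
    intro z hz k
    have h1 : lam k * (ω k z / Om ω P k) = 0 :=
      le_antisymm (hz ▸ hterm k z)
        (mul_nonneg (hlp k).le (div_nonneg (hωnn k z) (hOmpos k).le))
    have h2 : ω k z / Om ω P k = 0 := by
      rcases mul_eq_zero.1 h1 with h | h
      · exact absurd h (ne_of_gt (hlp k))
      · exact h
    rcases div_eq_zero_iff.1 h2 with h | h
    · exact h
    · exact absurd h (ne_of_gt (hOmpos k))
  have hsint : Integrable s P := by
    apply integrable_finset_sum
    intro l _
    exact ((hωint l).div_const _).const_mul _
  set Wstar : Fin K → ℝ := fun k => Om ω P k / Om ω P KL with hWstar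
  have hWstarpos : ∀ k, 0 < Wstar k := fun k => div_pos (hOmpos k) (hOmpos KL)
  -- Existence: `Wstar` solves the system.
  have hGamStar : ∀ k, Gam ω lam (Pbar ω P lam) Wstar k = 1 := by
    intro k
    have hD : ∀ z, (∑ l, lam l / Wstar l * ω l z) = Om ω P KL * s z := by
      intro z
      rw [hs, Finset.mul_sum]
      refine Finset.sum_congr rfl fun l _ => ?_
      have h1 : Wstar l = Om ω P l / Om ω P KL := rfl
      rw [h1]
      field_simp
    set f : ↥Zs → ℝ := fun z => ω k z / (∑ l, lam l / Wstar l * ω l z) with hf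
    have hfmeas : Measurable f := by
      apply (hωmeas k).div
      apply Finset.measurable_sum
      intro l _
      exact (hωmeas l).const_mul _
    have hfbd : ∀ z, |f z| ≤ Om ω P k / (lam k * Om ω P KL) := by
      intro z
      have hDnn : 0 ≤ (∑ l, lam l / Wstar l * ω l z) := by
        rw [hD]; exact mul_nonneg (hOmpos KL).le (hs_nonneg z)
      have hfnn : 0 ≤ f z := div_nonneg (hωnn k z) hDnn
      rw [abs_of_nonneg hfnn]
      show ω k z / (∑ l, lam l / Wstar l * ω l z) ≤ Om ω P k / (lam k * Om ω P KL)
      rcases eq_or_lt_of_le (hs_nonneg z) with hsz | hsz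
      · rw [hD, ← hsz, mul_zero, div_zero]
        exact le_of_lt (div_pos (hOmpos k) (mul_pos (hlp k) (hOmpos KL)))
      · have hDz : 0 < Om ω P KL * s z := mul_pos (hOmpos KL) hsz
        rw [hD, div_le_div_iff₀ hDz (mul_pos (hlp k) (hOmpos KL))]
        have hdiv : ω k z / Om ω P k * Om ω P k = ω k z :=
          div_mul_cancel₀ _ (ne_of_gt (hOmpos k))
        have h1 : lam k * ω k z ≤ Om ω P k * s z := by
          have h := mul_le_mul_of_nonneg_right (hterm k z) (hOmpos k).le
          rw [mul_assoc, hdiv] at h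
          linarith
        nlinarith [mul_le_mul_of_nonneg_right h1 (hOmpos KL).le]
    have hint : ∫ z, f z ∂(Pbar ω P lam) = ∫ z, f z * s z ∂P :=
      integral_Pbar P ω lam hlp hωmeas hωnn hωint hOmpos hfmeas hfbd
    have hpt : ∀ z, f z * s z = ω k z / Om ω P KL := by
      intro z
      have hfz : f z = ω k z / (Om ω P KL * s z) := by rw [hf]; simp only [hD]
      rcases eq_or_lt_of_le (hs_nonneg z) with hsz | hsz
      · rw [hfz, ← hsz]
        simp [hszero z hsz.symm k]
      · rw [hfz]
        rw [div_mul_eq_mul_div, mul_comm (Om ω P KL) (s z), ← div_div,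
          mul_div_assoc, div_self (ne_of_gt hsz), mul_one]
    have hI : ∫ z, f z ∂(Pbar ω P lam) = Om ω P k / Om ω P KL := by
      rw [hint, integral_congr_ae (Filter.Eventually.of_forall hpt)]
      rw [integral_div]
      rfl
    have hGam : Gam ω lam (Pbar ω P lam) Wstar k
        = (Wstar k)⁻¹ * ∫ z, f z ∂(Pbar ω P lam) := rfl
    rw [hGam, hI]
    have h2 : Wstar k = Om ω P k / Om ω P KL := rfl
    rw [← h2]
    exact inv_mul_cancel₀ (ne_of_gt (hWstarpos k))
  have hSolStar : IsSol hK ω lam (Pbar ω P lam) Wstar :=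
    ⟨hWstarpos, by show Om ω P KL / Om ω P KL = 1; exact div_self (ne_of_gt (hOmpos KL)),
      hGamStar⟩
  refine ⟨Wstar, hSolStar, ?_⟩
  rintro W ⟨hWpos, hWnorm, hWgam⟩
  -- Uniqueness
  set D : ↥Zs → ℝ := fun z => ∑ l, lam l / W l * ω l z with hDdef
  have hD_nonneg : ∀ z, 0 ≤ D z := fun z => Finset.sum_nonneg fun l _ =>
    mul_nonneg (div_nonneg (hlp l).le (hWpos l).le) (hωnn l z)
  have hDzero : ∀ z, D z = 0 → ∀ k, ω k z = 0 := by
    intro z hz k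
    have h1 : lam k / W k * ω k z = 0 := le_antisymm (hz ▸ Finset.single_le_sum
      (fun l (_ : l ∈ Finset.univ) =>
        mul_nonneg (div_nonneg (hlp l).le (hWpos l).le) (hωnn l z))
      (Finset.mem_univ k))
      (mul_nonneg (div_nonneg (hlp k).le (hWpos k).le) (hωnn k z))
    rcases mul_eq_zero.1 h1 with h | h
    · exact absurd h (ne_of_gt (div_pos (hlp k) (hWpos k)))
    · exact h
  have hDmeas : Measurable D := by
    rw [hDdef]
    apply Finset.measurable_sum
    intro l _
    exact (hωmeas l).const_mul _
  set φ : Fin K → ℝ := fun k => Om ω P k / W k with hφ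
  obtain ⟨m, -, hm⟩ := Finset.exists_max_image Finset.univ φ ⟨KL, Finset.mem_univ KL⟩
  set ρ : ℝ := φ m with hρdef
  have hρpos : 0 < ρ := div_pos (hOmpos m) (hWpos m)
  have hmax : ∀ k, φ k ≤ ρ := fun k => hm k (Finset.mem_univ k)
  have hterm_id : ∀ (l : Fin K) (z), lam l / W l * ω l z
      = φ l * (lam l * (ω l z / Om ω P l)) := by
    intro l z
    have h0 : φ l = Om ω P l / W l := rfl
    rw [h0]
    field_simp [ne_of_gt (hOmpos l), ne_of_gt (hWpos l)]
  have hDle : ∀ z, D z ≤ ρ * s z := by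
    intro z
    have h0 : D z = ∑ l, φ l * (lam l * (ω l z / Om ω P l)) := by
      rw [hDdef]
      exact Finset.sum_congr rfl fun l _ => hterm_id l z
    rw [h0]
    calc ∑ l, φ l * (lam l * (ω l z / Om ω P l))
        ≤ ∑ l, ρ * (lam l * (ω l z / Om ω P l)) := Finset.sum_le_sum fun l _ =>
          mul_le_mul_of_nonneg_right (hmax l)
            (mul_nonneg (hlp l).le (div_nonneg (hωnn l z) (hOmpos l).le))
      _ = ρ * s z := by rw [hs, Finset.mul_sum]
  have hgmeas : ∀ k : Fin K, Measurable fun z => ω k z / D z :=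
    fun k => (hωmeas k).div hDmeas
  have hgbd : ∀ (k : Fin K) (z), |ω k z / D z| ≤ W k / lam k := by
    intro k z
    rw [abs_of_nonneg (div_nonneg (hωnn k z) (hD_nonneg z))]
    rcases eq_or_lt_of_le (hD_nonneg z) with hDz | hDz
    · rw [← hDz, div_zero]
      exact div_nonneg (hWpos k).le (hlp k).le
    · rw [div_le_div_iff₀ hDz (hlp k)]
      have h1 : lam k / W k * ω k z ≤ D z := Finset.single_le_sum
        (fun l (_ : l ∈ Finset.univ) =>
          mul_nonneg (div_nonneg (hlp l).le (hWpos l).le) (hωnn l z))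
        (Finset.mem_univ k)
      have h3 : lam k / W k * ω k z * W k = lam k * ω k z := by
        rw [div_mul_eq_mul_div, div_mul_cancel₀ _ (ne_of_gt (hWpos k))]
      calc ω k z * lam k = lam k / W k * ω k z * W k := by rw [h3]; ring
        _ ≤ D z * W k := mul_le_mul_of_nonneg_right h1 (hWpos k).le
        _ = W k * D z := by ring
  have hgsint : ∀ k : Fin K, Integrable (fun z => (ω k z / D z) * s z) P := fun k =>
    hsint.bdd_mul (hgmeas k).aestronglyMeasurable
      (c := W k / lam k) (Filter.Eventually.of_forall fun z => by rw [Real.norm_eq_abs]; exact hgbd k z)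
  have hgkey : ∀ k : Fin K, ∫ z, (ω k z / D z) * s z ∂P = W k := by
    intro k
    have hIPbar : ∫ z, ω k z / D z ∂(Pbar ω P lam) = W k := by
      have h0 := hWgam k
      rw [Gam] at h0
      have h1 : ∫ z, ω k z / D z ∂(Pbar ω P lam)
          = ∫ z, ω k z / (∑ l, lam l / W l * ω l z) ∂(Pbar ω P lam) := rfl
      rw [h1]
      exact ((inv_mul_eq_one₀ (ne_of_gt (hWpos k))).1 h0).symm
    have h2 := integral_Pbar P ω lam hlp hωmeas hωnn hωint hOmpos (hgmeas k) (hgbd k)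
    rw [hIPbar] at h2
    exact h2.symm
  have hae : ∀ x : Fin K, φ x = ρ →
      ∀ᵐ z ∂P, (ω x z / D z) * s z - ω x z / ρ = 0 := by
    intro x hx
    have hptge : ∀ z, ω x z / ρ ≤ (ω x z / D z) * s z := by
      intro z
      rcases eq_or_lt_of_le (hs_nonneg z) with hsz | hsz
      · rw [hszero z hsz.symm x, zero_div, zero_div, zero_mul]
      · have hDz : 0 < D z := by
          rcases eq_or_lt_of_le (hD_nonneg z) with h | h
          · exfalso
            have hall0 := hDzero z h.symm
            have : s z = 0 := by
              rw [hs]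
              refine Finset.sum_eq_zero fun l _ => ?_
              rw [hall0 l, zero_div, mul_zero]
            exact absurd this (ne_of_gt hsz)
          · exact h
        rw [div_mul_eq_mul_div, div_le_div_iff₀ hρpos hDz]
        have := hDle z
        nlinarith [hωnn x z]
    have hOmW : Om ω P x = ρ * W x := by
      have h0 : φ x = Om ω P x / W x := rfl
      rw [h0] at hx
      rw [← hx, div_mul_cancel₀ _ (ne_of_gt (hWpos x))]
    have hint2 : ∫ z, ((ω x z / D z) * s z - ω x z / ρ) ∂P = 0 := by
      rw [integral_sub (hgsint x) ((hωint x).div_const ρ), hgkey x, integral_div]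
      have h4 : (∫ z, ω x z ∂P) = Om ω P x := rfl
      rw [h4, hOmW, mul_comm, mul_div_assoc, div_self (ne_of_gt hρpos), mul_one, sub_self]
    exact (integral_eq_zero_iff_of_nonneg
      (fun z => sub_nonneg.2 (hptge z))
      ((hgsint x).sub ((hωint x).div_const ρ))).1 hint2
  have hnonadj : ∀ x y, φ x = ρ → φ y < ρ → ¬ (biasGraph ω P κ).Adj x y := by
    intro x y hx hy hadj
    have hae2 : ∀ᵐ z ∂P, ω x z * ω y z = 0 := by
      filter_upwards [hae x hx] with z hz
      by_contra hne
      rcases mul_ne_zero_iff.1 hne with ⟨hx0, hy0⟩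
      have hxpos : 0 < ω x z := lt_of_le_of_ne (hωnn x z) (Ne.symm hx0)
      have hypos : 0 < ω y z := lt_of_le_of_ne (hωnn y z) (Ne.symm hy0)
      have htpos : 0 < lam y * (ω y z / Om ω P y) :=
        mul_pos (hlp y) (div_pos hypos (hOmpos y))
      have hspos : 0 < s z := lt_of_lt_of_le htpos (hterm y z)
      have hDpos : 0 < D z := by
        rcases eq_or_lt_of_le (hD_nonneg z) with h | h
        · exact absurd (hDzero z h.symm y) (ne_of_gt hypos)
        · exact h
      have hDlt : D z < ρ * s z := by
        have h0 : D z = ∑ l, φ l * (lam l * (ω l z / Om ω P l)) := by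
          rw [hDdef]
          exact Finset.sum_congr rfl fun l _ => hterm_id l z
        rw [h0]
        calc ∑ l, φ l * (lam l * (ω l z / Om ω P l))
            < ∑ l, ρ * (lam l * (ω l z / Om ω P l)) := by
              refine Finset.sum_lt_sum (fun l _ => mul_le_mul_of_nonneg_right (hmax l)
                (mul_nonneg (hlp l).le (div_nonneg (hωnn l z) (hOmpos l).le)))
                ⟨y, Finset.mem_univ y, ?_⟩
              exact mul_lt_mul_of_pos_right hy htpos
          _ = ρ * s z := by rw [hs, Finset.mul_sum]
      have hlt2 : ω x z / ρ < (ω x z / D z) * s z := by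
        rw [div_mul_eq_mul_div, div_lt_div_iff₀ hρpos hDpos]
        nlinarith
      have := sub_eq_zero.1 hz
      linarith [this ▸ hlt2]
    have hz0 : ∫ z, ω x z * ω y z ∂P = 0 := integral_eq_zero_of_ae hae2
    have hk := hadj.2
    rw [hz0] at hk
    linarith
  have hall : ∀ k, φ k = ρ := by
    intro k
    by_contra hk
    obtain ⟨w⟩ := hconn.preconnected m k
    obtain ⟨x, y, hx, hy, hadj⟩ :=
      walk_boundary (S := {v : Fin K | φ v = ρ}) w rfl hk
    exact hnonadj x y hx (lt_of_le_of_ne (hmax y) hy) hadj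
  have hWKL : W KL = 1 := hWnorm
  have hρval : ρ = Om ω P KL := by
    have h0 := (hall KL).symm
    calc ρ = φ KL := h0
      _ = Om ω P KL / W KL := rfl
      _ = Om ω P KL := by rw [hWKL, div_one]
  funext k
  have hk : Om ω P k / W k = Om ω P KL := by
    have h0 : φ k = Om ω P k / W k := rfl
    rw [← h0, hall k, hρval]
  have h1 : Om ω P k = Om ω P KL * W k := by
    rw [div_eq_iff (ne_of_gt (hWpos k))] at hk
    linarith
  show W k = Om ω P k / Om ω P KL
  rw [h1, mul_div_cancel_left₀ _ (ne_of_gt (hOmpos KL))]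

end SelBias
end
end

section
/- Let ĥ_n : Z → ℝ be a random measurable function and h : Z → ℝ a measurable function with a ≤ h(z) ≤ b for all z ∈ Z. If Assumption (A1) holds, then for every δ ∈ (0,1), with probability at least 1 − δ: |∫ ĥ_n(z) dP̃_n(z) − ∫ h(z) dP̄(z)| ≤ sup_z |ĥ_n(z) − h(z)| + K C sup_z |h(z)| / √n + (b − a) √( log(2K/δ) / (2 λ̲ n) ). -/
open MeasureTheory ProbabilityTheory Real Finset
open scoped ENNReal NNReal

noncomputable section

namespace SelBias

variable {Z : Type*} [MeasurableSpace Z]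

variable {Z : Type*} [MeasurableSpace Z]



lemma integrable_dirac'' {f : Z → ℝ} (hf : Measurable f) (x : Z) :
    Integrable f (Measure.dirac x) := by
  refine ⟨hf.aestronglyMeasurable, ?_⟩
  unfold HasFiniteIntegral
  rw [lintegral_dirac' x hf.enorm]
  exact enorm_lt_top

lemma integrable_empDist {f : Z → ℝ} (hf : Measurable f) (m : ℕ) (hm : m ≠ 0) (X : ℕ → Z) :
    Integrable f (empDist m X) := by
  rw [empDist]
  refine Integrable.smul_measure ?_ (by simp [hm])
  exact integrable_finset_sum_measure.mpr fun i _ => integrable_dirac'' hf (X i)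

lemma integral_empDist {f : Z → ℝ} (hf : Measurable f) (m : ℕ) (X : ℕ → Z) :
    ∫ z, f z ∂(empDist m X) = (m:ℝ)⁻¹ * ∑ i ∈ Finset.range m, f (X i) := by
  rw [empDist, integral_smul_measure,
    integral_finset_sum_measure (fun i _ => integrable_dirac'' hf (X i))]
  simp only [ENNReal.toReal_inv, ENNReal.toReal_natCast, smul_eq_mul]
  congr 1
  exact Finset.sum_congr rfl fun i _ => integral_dirac' f (X i) hf.stronglyMeasurable

lemma integral_pooledDist {K : ℕ} (nv : Fin K → ℕ) (hs : (∑ j : Fin K, nv j) ≠ 0)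
    (hnv : ∀ k, nv k ≠ 0)
    (X : Fin K → ℕ → Z) {f : Z → ℝ} (hf : Measurable f) :
    ∫ z, f z ∂(pooledDist nv X) =
      ∑ k : Fin K, ((nv k : ℝ) / ((∑ j : Fin K, nv j : ℕ) : ℝ)) *
        ((nv k : ℝ)⁻¹ * ∑ i ∈ Finset.range (nv k), f (X k i)) := by
  have hcne : ∀ k : Fin K, ((nv k : ℝ≥0∞) / ((∑ j : Fin K, nv j : ℕ) : ℝ≥0∞)) ≠ ⊤ :=
    fun k => (ENNReal.div_lt_top (by simp) (by simpa using hs)).ne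
  rw [pooledDist, integral_finset_sum_measure
    (fun k _ => (integrable_empDist hf (nv k) (hnv k) (X k)).smul_measure (hcne k))]
  refine Finset.sum_congr rfl fun k _ => ?_
  rw [integral_smul_measure, integral_empDist hf, ENNReal.toReal_div,
    ENNReal.toReal_natCast, ENNReal.toReal_natCast, smul_eq_mul]




lemma hoeff_scalar (p t : ℝ) (hp0 : 0 ≤ p) (hp1 : p ≤ 1) :
    (1 - p) * Real.exp (-(p*t)) + p * Real.exp ((1-p)*t) ≤ Real.exp (t^2/8) := by
  have hD : ∀ x : ℝ, 0 < 1 - p + p * Real.exp x := by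
    intro x
    rcases le_total (Real.exp x) 1 with hE | hE
    · nlinarith [Real.exp_pos x, mul_le_mul_of_nonneg_left hE (sub_nonneg.2 hp1)]
    · nlinarith [mul_le_mul_of_nonneg_left hE hp0]
  set f : ℝ → ℝ := fun x => x^2/8 + p*x - Real.log (1 - p + p * Real.exp x) with hfdef
  set g : ℝ → ℝ := fun x => x/4 + p - p * Real.exp x / (1 - p + p * Real.exp x) with hgdef
  have hDd : ∀ x : ℝ, HasDerivAt (fun x => 1 - p + p * Real.exp x) (p * Real.exp x) x := by
    intro x
    simpa using ((Real.hasDerivAt_exp x).const_mul p).const_add (1 - p)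
  have hf : ∀ x, HasDerivAt f (g x) x := by
    intro x
    have h1 : HasDerivAt (fun x : ℝ => x^2/8 + p*x) (x/4 + p) x := by
      have := ((hasDerivAt_pow 2 x).div_const 8).add ((hasDerivAt_id x).const_mul p)
      exact this.congr_deriv (by ring)
    have h2 : HasDerivAt (fun x => Real.log (1 - p + p * Real.exp x))
        (p * Real.exp x / (1 - p + p * Real.exp x)) x := (hDd x).log (hD x).ne'
    exact h1.sub h2
  have hg : ∀ x, HasDerivAt g
      (1/4 - (p * Real.exp x * (1 - p + p * Real.exp x) - p * Real.exp x * (p * Real.exp x))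
        / (1 - p + p * Real.exp x)^2) x := by
    intro x
    have h1 : HasDerivAt (fun x : ℝ => x/4 + p) (1/4) x := by
      simpa using ((hasDerivAt_id x).div_const 4).add_const p
    have h2 : HasDerivAt (fun x => p * Real.exp x / (1 - p + p * Real.exp x))
        ((p * Real.exp x * (1 - p + p * Real.exp x) - p * Real.exp x * (p * Real.exp x))
          / (1 - p + p * Real.exp x)^2) x :=
      ((Real.hasDerivAt_exp x).const_mul p).div (hDd x) (hD x).ne'
    exact h1.sub h2
  have hg0 : ∀ x : ℝ, 0 ≤ 1/4 - (p * Real.exp x * (1 - p + p * Real.exp x)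
      - p * Real.exp x * (p * Real.exp x)) / (1 - p + p * Real.exp x)^2 := by
    intro x
    rw [sub_nonneg, div_le_iff₀ (by have := hD x; positivity)]
    nlinarith [sq_nonneg ((1-p) - p * Real.exp x), Real.exp_pos x]
  have hgmono : Monotone g :=
    monotone_of_deriv_nonneg (fun x => (hg x).differentiableAt)
      (fun x => by rw [(hg x).deriv]; exact hg0 x)
  have hg00 : g 0 = 0 := by simp [hgdef]
  have hfc : Continuous f := by
    have : Differentiable ℝ f := fun x => (hf x).differentiableAt
    exact this.continuous
  have hf0 : f 0 = 0 := by simp [hfdef]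
  have hfnn : ∀ x, 0 ≤ f x := by
    intro x
    rcases le_total 0 x with hx | hx
    · have := monotoneOn_of_deriv_nonneg (convex_Ici 0) hfc.continuousOn
        (fun y _ => (hf y).differentiableAt.differentiableWithinAt)
        (fun y hy => by
          rw [(hf y).deriv]
          rw [interior_Ici] at hy
          exact hg00 ▸ hgmono (le_of_lt hy))
        (Set.self_mem_Ici) hx hx
      linarith [hf0 ▸ this]
    · have := antitoneOn_of_deriv_nonpos (convex_Iic 0) hfc.continuousOn
        (fun y _ => (hf y).differentiableAt.differentiableWithinAt)
        (fun y hy => by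
          rw [(hf y).deriv]
          rw [interior_Iic] at hy
          exact hg00 ▸ hgmono (le_of_lt hy))
        (hx) (Set.self_mem_Iic) hx
      linarith [hf0 ▸ this]
  have hft := hfnn t
  have hlog : Real.log (1 - p + p * Real.exp t) ≤ t^2/8 + p*t := by
    simp only [hfdef] at hft; linarith
  have h1 : (1 - p + p * Real.exp t) ≤ Real.exp (t^2/8 + p*t) :=
    (Real.log_le_iff_le_exp (hD t)).mp hlog
  have h2 : Real.exp (-(p*t)) * (1 - p + p * Real.exp t)
      ≤ Real.exp (-(p*t)) * Real.exp (t^2/8 + p*t) :=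
    mul_le_mul_of_nonneg_left h1 (Real.exp_nonneg _)
  calc (1 - p) * Real.exp (-(p*t)) + p * Real.exp ((1-p)*t)
      = Real.exp (-(p*t)) * (1 - p + p * Real.exp t) := by
        rw [show (1-p)*t = -(p*t) + t by ring, Real.exp_add]; ring
    _ ≤ Real.exp (-(p*t)) * Real.exp (t^2/8 + p*t) := h2
    _ = Real.exp (t^2/8) := by rw [← Real.exp_add]; ring_nf




lemma integrable_of_bddc {β : Type*} [MeasurableSpace β] (ν : Measure β) [IsFiniteMeasure ν]
    {f : β → ℝ} (hf : Measurable f) (M : ℝ) (hM : ∀ z, |f z| ≤ M) : Integrable f ν :=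
  (integrable_const M).mono' hf.aestronglyMeasurable
    (ae_of_all _ fun z => by simpa [Real.norm_eq_abs] using hM z)

lemma abs_le_max_of_mem {x a b : ℝ} (h1 : a ≤ x) (h2 : x ≤ b) : |x| ≤ max |a| |b| := by
  rcases abs_cases x with ⟨he, _⟩ | ⟨he, _⟩
  · rw [he]; exact le_max_of_le_right (le_trans h2 (le_abs_self b))
  · rw [he]
    exact le_max_of_le_left (by rw [abs_eq_max_neg]; exact le_max_of_le_right (by linarith))

lemma hoeff_mgf {β : Type*} [MeasurableSpace β] (ν : Measure β) [IsProbabilityMeasure ν]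
    (g : β → ℝ) (hg : Measurable g) (a b t : ℝ) (hab : ∀ z, a ≤ g z ∧ g z ≤ b)
    (hmean : ∫ z, g z ∂ν = 0) :
    mgf g ν t ≤ Real.exp (t^2 * (b-a)^2 / 8) := by
  have hgint : Integrable g ν :=
    integrable_of_bddc ν hg (max |a| |b|) (fun z => abs_le_max_of_mem (hab z).1 (hab z).2)
  have ha0 : a ≤ 0 := by
    have : ∫ _z, (a:ℝ) ∂ν ≤ ∫ z, g z ∂ν :=
      integral_mono (integrable_const a) hgint (fun z => (hab z).1)
    simpa [hmean] using this
  have hb0 : 0 ≤ b := by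
    have : ∫ z, g z ∂ν ≤ ∫ _z, (b:ℝ) ∂ν :=
      integral_mono hgint (integrable_const b) (fun z => (hab z).2)
    simpa [hmean] using this
  rcases eq_or_lt_of_le (ha0.trans hb0) with hab0 | hablt
  · have ha : a = 0 := le_antisymm ha0 (by rw [hab0]; exact hb0)
    have hb : b = 0 := by rw [← hab0]; exact ha
    have hg0 : g = fun _ => (0:ℝ) :=
      funext fun z => le_antisymm (hb ▸ (hab z).2) (ha ▸ (hab z).1)
    rw [hg0, mgf_const, mul_zero, Real.exp_zero]
    exact Real.one_le_exp (by positivity)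
  · set p : ℝ := -a / (b - a) with hpdef
    have hba : (0:ℝ) < b - a := sub_pos.2 hablt
    have hp0 : 0 ≤ p := div_nonneg (neg_nonneg.2 ha0) hba.le
    have hp1 : p ≤ 1 := by rw [hpdef, div_le_one hba]; linarith
    set C0 : ℝ := (b * Real.exp (t*a) - a * Real.exp (t*b)) / (b - a) with hC0def
    set C1 : ℝ := (Real.exp (t*b) - Real.exp (t*a)) / (b - a) with hC1def
    have hpt : ∀ z, Real.exp (t * g z) ≤ C0 + C1 * g z := by
      intro z
      rcases hab z with ⟨h1, h2⟩
      set θ : ℝ := (b - g z) / (b - a) with hθdef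
      have hθ0 : 0 ≤ θ := div_nonneg (by linarith) hba.le
      have hθ1 : 0 ≤ 1 - θ := by rw [sub_nonneg, hθdef, div_le_one hba]; linarith
      have hcvx := convexOn_exp.2 (Set.mem_univ (t*a)) (Set.mem_univ (t*b)) hθ0 hθ1 (by ring)
      have harg : θ • (t*a) + (1-θ) • (t*b) = t * g z := by
        simp only [smul_eq_mul, hθdef]
        field_simp
        ring
      rw [harg] at hcvx
      calc Real.exp (t * g z) ≤ θ * Real.exp (t*a) + (1-θ) * Real.exp (t*b) := by
            simpa [smul_eq_mul] using hcvx
        _ = C0 + C1 * g z := by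
            simp only [hθdef, hC0def, hC1def]
            field_simp
            ring
    have hexpint : Integrable (fun z => Real.exp (t * g z)) ν := by
      refine integrable_of_bddc ν ((hg.const_mul t).exp) (Real.exp (|t| * max |a| |b|)) ?_
      intro z
      rw [abs_of_nonneg (Real.exp_nonneg _), Real.exp_le_exp]
      calc t * g z ≤ |t * g z| := le_abs_self _
        _ = |t| * |g z| := abs_mul _ _
        _ ≤ |t| * max |a| |b| :=
            mul_le_mul_of_nonneg_left (abs_le_max_of_mem (hab z).1 (hab z).2) (abs_nonneg t)
    have hmgf : mgf g ν t ≤ C0 := by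
      unfold mgf
      calc ∫ z, Real.exp (t * g z) ∂ν ≤ ∫ z, (C0 + C1 * g z) ∂ν :=
            integral_mono hexpint ((integrable_const C0).add (hgint.const_mul C1)) hpt
        _ = C0 := by
            rw [integral_add (integrable_const _) (hgint.const_mul _), integral_const,
              integral_const_mul, hmean]
            simp
    have e1 : -(p*(t*(b-a))) = t*a := by rw [hpdef]; field_simp
    have e2 : (1-p)*(t*(b-a)) = t*b := by rw [hpdef]; field_simp; ring
    have hC0eq : C0 = (1-p) * Real.exp (-(p*(t*(b-a)))) + p * Real.exp ((1-p)*(t*(b-a))) := by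
      rw [e1, e2, hC0def, hpdef]
      field_simp
      ring
    calc mgf g ν t ≤ C0 := hmgf
      _ ≤ Real.exp ((t*(b-a))^2/8) := by rw [hC0eq]; exact hoeff_scalar p (t*(b-a)) hp0 hp1
      _ = Real.exp (t^2*(b-a)^2/8) := by ring_nf




lemma iIndepFun_comp_inj {Ω ι ι' : Type*} [MeasurableSpace Ω] {μ : Measure Ω}
    [Nonempty ι'] {β : Type*} [mβ : MeasurableSpace β] {f : ι → Ω → β}
    (h : iIndepFun f μ) (g : ι' → ι) (hg : Function.Injective g) :
    iIndepFun (fun i => f (g i)) μ := by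
  rw [iIndepFun_iff_measure_inter_preimage_eq_mul] at h ⊢
  intro S sets hsets
  classical
  set sets' : ι → Set β := fun i => sets (Function.invFun g i) with hsets'
  have hinv : ∀ j : ι', Function.invFun g (g j) = j := Function.leftInverse_invFun hg
  have h1 : (⋂ j ∈ S, (f (g j)) ⁻¹' sets j) = ⋂ i ∈ S.image g, (f i) ⁻¹' sets' i := by
    ext a
    simp only [Set.mem_iInter, Finset.mem_image]
    constructor
    · rintro hx i ⟨j, hj, rfl⟩
      simpa only [hsets', hinv j] using hx j hj
    · intro hx j hj
      have := hx (g j) ⟨j, hj, rfl⟩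
      simpa only [hsets', hinv j] using this
  have h2 := h (S.image g) (sets := sets') (fun i hi => by
    rcases Finset.mem_image.mp hi with ⟨j, hj, rfl⟩
    rw [hsets']; simp only [hinv j]; exact hsets j hj)
  rw [h1, h2, Finset.prod_image (fun x _ y _ hxy => hg hxy)]
  refine Finset.prod_congr rfl fun j _ => by simp only [hsets', hinv j]

/-- One-sided Chernoff bound for the sum of independent, centered, bounded variables. -/
lemma chernoff_sum {α : Type*} [MeasurableSpace α] (Pr : Measure α) [IsProbabilityMeasure Pr]
    {m : ℕ} (hm : 0 < m) (Y : Fin m → α → ℝ) (hYmeas : ∀ i, Measurable (Y i))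
    (hindep : iIndepFun Y Pr)
    (c : ℝ) (hc : 0 < c) (hYb : ∀ i x, |Y i x| ≤ c)
    (hmgf : ∀ i t, mgf (Y i) Pr t ≤ Real.exp (t^2 * c^2 / 8))
    (ε : ℝ) (hε : 0 ≤ ε) :
    (Pr {x | (m:ℝ) * ε ≤ ∑ i, Y i x}).toReal ≤ Real.exp (-2 * m * ε^2 / c^2) := by
  set t : ℝ := 4 * ε / c^2 with htdef
  have ht : 0 ≤ t := by positivity
  have hSum_meas : Measurable (fun x => ∑ i, Y i x) := Finset.measurable_sum _ fun i _ => hYmeas i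
  have hint : Integrable (fun x => Real.exp (t * (∑ i, Y i x))) Pr := by
    refine integrable_of_bddc Pr ((hSum_meas.const_mul t).exp) (Real.exp (t * (m * c))) ?_
    intro x
    rw [abs_of_nonneg (Real.exp_nonneg _), Real.exp_le_exp]
    refine mul_le_mul_of_nonneg_left ?_ ht
    calc (∑ i, Y i x) ≤ |∑ i, Y i x| := le_abs_self _
      _ ≤ ∑ i, |Y i x| := Finset.abs_sum_le_sum_abs _ _
      _ ≤ ∑ _i : Fin m, c := Finset.sum_le_sum fun i _ => hYb i x
      _ = m * c := by simp [mul_comm]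
  have hchern := measure_ge_le_exp_mul_mgf (μ := Pr) (X := fun x => ∑ i, Y i x)
    ((m:ℝ) * ε) ht hint
  have hmgfsum : mgf (fun x => ∑ i, Y i x) Pr t ≤ Real.exp (m * (t^2 * c^2/8)) := by
    have : (fun x => ∑ i, Y i x) = ∑ i, Y i := by funext x; simp
    rw [this, hindep.mgf_sum hYmeas]
    calc ∏ i : Fin m, mgf (Y i) Pr t ≤ ∏ _i : Fin m, Real.exp (t^2*c^2/8) :=
          Finset.prod_le_prod (fun i _ => mgf_nonneg) (fun i _ => hmgf i t)
      _ = Real.exp (m * (t^2*c^2/8)) := by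
          rw [Finset.prod_const, ← Real.exp_nat_mul]
          simp [Finset.card_univ]
  calc (Pr {x | (m:ℝ)*ε ≤ ∑ i, Y i x}).toReal
      ≤ Real.exp (-t * ((m:ℝ)*ε)) * mgf (fun x => ∑ i, Y i x) Pr t := hchern
    _ ≤ Real.exp (-t * ((m:ℝ)*ε)) * Real.exp (m * (t^2*c^2/8)) :=
        mul_le_mul_of_nonneg_left hmgfsum (Real.exp_nonneg _)
    _ = Real.exp (-t*(m*ε) + m*(t^2*c^2/8)) := (Real.exp_add _ _).symm
    _ = Real.exp (-2 * m * ε^2 / c^2) := by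
        congr 1
        rw [htdef]
        field_simp
        ring


set_option maxHeartbeats 2000000 in
/-- Hoeffding-type deviation bound between the pooled empirical integral of a random
function and the mixture integral of its deterministic target. -/
theorem pooled_integral_deviation
    {q : ℕ} {Zs : Set (EuclideanSpace ℝ (Fin q))} (hZs : MeasurableSet Zs)
    [Nonempty ↥Zs]
    {K : ℕ} (hK : 0 < K)
    (Pks : Fin K → Measure ↥Zs) (hPks : ∀ k, IsProbabilityMeasure (Pks k))
    (lam : Fin K → ℝ) (hlam : ∀ k, lam k ∈ Set.Ioo (0:ℝ) 1) (hlamsum : ∑ k, lam k = 1)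
    (C lamlow : ℝ) (hC : 0 ≤ C) (hlamlow : 0 < lamlow)
    {α : Type} [MeasurableSpace α] (Pr : Measure α) [IsProbabilityMeasure Pr]
    (nv : Fin K → ℕ) (n : ℕ) (hn : n = ∑ k, nv k) (hnv : ∀ k, 0 < nv k)
    (X : Fin K → ℕ → α → ↥Zs)
    (hXmeas : ∀ k i, Measurable (X k i))
    (hXlaw : ∀ k, ∀ i < nv k, Measure.map (X k i) Pr = Pks k)
    (hXindep : iIndepFun
      (fun (p : Σ k : Fin K, Fin (nv k)) => fun a => X p.1 p.2 a) Pr)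
    (hfluct : ∀ k, |lam k - (nv k : ℝ) / n| ≤ C / Real.sqrt n)
    (hlow : ∀ k, lamlow ≤ (nv k : ℝ) / n)
    (hhat : α → ↥Zs → ℝ) (h : ↥Zs → ℝ)
    (hhatmeas : ∀ a, Measurable (hhat a)) (hmeas : Measurable h)
    (lo hi : ℝ) (hbound : ∀ z, lo ≤ h z ∧ h z ≤ hi)
    (hbdd : ∀ a, BddAbove (Set.range fun z => |hhat a z - h z|))
    (δ : ℝ) (hδ : δ ∈ Set.Ioo (0:ℝ) 1) :
    ENNReal.ofReal (1 - δ) ≤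
      Pr {a |
        |(∫ z, hhat a z ∂(pooledDist nv fun k i => X k i a)) -
            ∫ z, h z ∂(∑ k, ENNReal.ofReal (lam k) • Pks k)| ≤
          (⨆ z, |hhat a z - h z|) + (K : ℝ) * C * (⨆ z, |h z|) / Real.sqrt n +
            (hi - lo) * Real.sqrt (Real.log (2 * K / δ) / (2 * lamlow * n))} := by
  classical
  haveI : Nonempty (Fin K) := Fin.pos_iff_nonempty.mp hK
  obtain ⟨z₀⟩ := (inferInstance : Nonempty ↥Zs)
  have hδ0 : (0:ℝ) < δ := hδ.1
  have hδ1 : δ < 1 := hδ.2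
  have hKR : (1:ℝ) ≤ (K:ℝ) := by exact_mod_cast hK
  have hnpos : 0 < n := by
    rw [hn]; exact Finset.sum_pos (fun k _ => hnv k) Finset.univ_nonempty
  have hnR : (0:ℝ) < (n:ℝ) := by exact_mod_cast hnpos
  have hlohi : lo ≤ hi := le_trans (hbound z₀).1 (hbound z₀).2
  have hMbdd : BddAbove (Set.range fun z : ↥Zs => |h z|) :=
    ⟨max |lo| |hi|, by rintro _ ⟨z, rfl⟩; exact abs_le_max_of_mem (hbound z).1 (hbound z).2⟩
  set M : ℝ := ⨆ z : ↥Zs, |h z| with hMdef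
  have hM : ∀ z, |h z| ≤ M := fun z => le_ciSup hMbdd z
  have hM0 : 0 ≤ M := le_trans (abs_nonneg _) (hM z₀)
  have hlogpos : 0 ≤ Real.log (2 * (K:ℝ) / δ) := by
    apply Real.log_nonneg
    rw [le_div_iff₀ hδ0]
    nlinarith
  set q : ℝ := Real.log (2 * (K:ℝ) / δ) / (2 * lamlow * (n:ℝ)) with hqdef
  have hq0 : 0 ≤ q := div_nonneg hlogpos (by positivity)
  set t : ℝ := (hi - lo) * Real.sqrt q with htdef
  have ht0 : 0 ≤ t := mul_nonneg (by linarith) (Real.sqrt_nonneg _)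
  set μv : Fin K → ℝ := fun k => ∫ z, h z ∂(Pks k) with hμdef
  have hinth : ∀ k, Integrable h (Pks k) := fun k =>
    integrable_of_bddc _ hmeas (max |lo| |hi|)
      (fun z => abs_le_max_of_mem (hbound z).1 (hbound z).2)
  have hμlo : ∀ k, lo ≤ μv k := by
    intro k
    have : ∫ _z, (lo:ℝ) ∂(Pks k) ≤ ∫ z, h z ∂(Pks k) :=
      integral_mono (integrable_const _) (hinth k) fun z => (hbound z).1
    simpa [hμdef] using this
  have hμhi : ∀ k, μv k ≤ hi := by
    intro k
    have : ∫ z, h z ∂(Pks k) ≤ ∫ _z, (hi:ℝ) ∂(Pks k) :=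
      integral_mono (hinth k) (integrable_const _) fun z => (hbound z).2
    simpa [hμdef] using this
  set Bh : Fin K → α → ℝ :=
    fun k a => (nv k : ℝ)⁻¹ * ∑ i ∈ Finset.range (nv k), h (X k i a) with hBhdef
  -- per-k tail bound
  have tailk : ∀ k : Fin K, Pr {a | t < |Bh k a - μv k|} ≤ ENNReal.ofReal (δ / K) := by
    intro k
    have hnvR : (0:ℝ) < (nv k : ℝ) := by exact_mod_cast hnv k
    rcases eq_or_lt_of_le hlohi with heq | hlt
    · -- degenerate case hi = lo
      have hconst : ∀ z, h z = lo := fun z => le_antisymm (heq ▸ (hbound z).2) (hbound z).1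
      have hμ : μv k = lo := by
        rw [hμdef]
        rw [show h = fun _ => lo from funext hconst]
        simp
      have hB : ∀ a, Bh k a = lo := by
        intro a
        rw [hBhdef]
        simp only [hconst]
        rw [Finset.sum_const, Finset.card_range, nsmul_eq_mul]
        field_simp
      have hempty : {a : α | t < |Bh k a - μv k|} = ∅ := by
        ext a
        simp only [Set.mem_setOf_eq, hB a, hμ, sub_self, abs_zero, Set.mem_empty_iff_false,
          iff_false, not_lt]
        exact ht0
      rw [hempty]
      simp
    · set c : ℝ := hi - lo with hcdef
      have hc : 0 < c := sub_pos.2 hlt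
      haveI : Nonempty (Fin (nv k)) := Fin.pos_iff_nonempty.mp (hnv k)
      set Y : Fin (nv k) → α → ℝ := fun i a => h (X k i a) - μv k with hYdef
      have hYmeas : ∀ i, Measurable (Y i) := fun i => (hmeas.comp (hXmeas k i)).sub measurable_const
      have hYb : ∀ i a, |Y i a| ≤ c := by
        intro i a
        have h1 := (hbound (X k i a)).1
        have h2 := (hbound (X k i a)).2
        have h3 := hμlo k
        have h4 := hμhi k
        rw [hYdef, abs_le]
        constructor <;> simp only <;> [linarith; linarith]
      have hXk : iIndepFun (fun i : Fin (nv k) => fun a => X k i a) Pr :=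
        iIndepFun_comp_inj hXindep (fun i : Fin (nv k) => (⟨k, i⟩ : Σ k : Fin K, Fin (nv k)))
          (fun i j hij => by simpa using hij)
      have hYindep : iIndepFun Y Pr := by
        have := hXk.comp (fun _ => fun z : ↥Zs => h z - μv k) (fun _ => hmeas.sub measurable_const)
        exact this
      have hmgfY : ∀ (i : Fin (nv k)) (t₀ : ℝ), mgf (Y i) Pr t₀ ≤ Real.exp (t₀^2 * c^2 / 8) := by
        intro i t₀
        have hmap : mgf (Y i) Pr t₀ = mgf (fun z => h z - μv k) (Pks k) t₀ := by
          rw [mgf, mgf, ← hXlaw k i i.isLt,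
            integral_map (hXmeas k i).aemeasurable (f := fun ω => Real.exp (t₀ * (h ω - μv k)))
              (((hmeas.sub measurable_const).const_mul t₀).exp).aestronglyMeasurable]
        rw [hmap]
        have hb := hoeff_mgf (Pks k) (fun z => h z - μv k) (hmeas.sub measurable_const)
          (lo - μv k) (hi - μv k) t₀
          (fun z => ⟨by have := (hbound z).1; linarith,
                     by have := (hbound z).2; linarith⟩)
          (by rw [integral_sub (hinth k) (integrable_const _)]; simp [hμdef])
        have heq2 : (hi - μv k) - (lo - μv k) = c := by rw [hcdef]; ring
        rwa [heq2] at hb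
      have hU := chernoff_sum Pr (hnv k) Y hYmeas hYindep c hc hYb hmgfY t ht0
      have hVindep : iIndepFun (fun i => -(Y i)) Pr :=
        hYindep.comp (fun _ => fun x : ℝ => -x) (fun _ => measurable_neg)
      have hV := chernoff_sum Pr (hnv k) (fun i => -(Y i)) (fun i => (hYmeas i).neg)
        hVindep c hc (fun i a => by simpa using hYb i a)
        (fun i t₀ => by
          rw [mgf_neg]
          have := hmgfY i (-t₀)
          rwa [show (-t₀)^2 = t₀^2 by ring] at this
          ) t ht0
      have hexp : Real.exp (-2 * (nv k : ℝ) * t^2 / c^2) ≤ δ / (2*(K:ℝ)) := by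
        have ht2 : t^2 = c^2 * q := by
          rw [htdef, mul_pow, Real.sq_sqrt hq0, hcdef]
        have hnk : lamlow * (n:ℝ) ≤ (nv k : ℝ) := by
          have hh := hlow k
          rw [le_div_iff₀ hnR] at hh
          linarith
        have hge : Real.log (2*(K:ℝ)/δ) ≤ 2 * (nv k : ℝ) * t^2 / c^2 := by
          have he1 : 2 * (nv k : ℝ) * t^2 / c^2 = 2 * (nv k : ℝ) * q := by
            rw [ht2]
            field_simp
          rw [he1, hqdef]
          have he2 : 2 * (nv k:ℝ) * (Real.log (2*(K:ℝ)/δ) / (2 * lamlow * (n:ℝ)))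
              = (nv k:ℝ) * Real.log (2*(K:ℝ)/δ) / (lamlow * (n:ℝ)) := by
            field_simp
          rw [he2, le_div_iff₀ (by positivity : (0:ℝ) < lamlow * (n:ℝ))]
          nlinarith [hlogpos, hnk]
        calc Real.exp (-2 * (nv k:ℝ) * t^2 / c^2)
            = Real.exp (-(2 * (nv k:ℝ) * t^2 / c^2)) := by ring_nf
          _ ≤ Real.exp (-Real.log (2*(K:ℝ)/δ)) := Real.exp_le_exp.mpr (by linarith)
          _ = (2*(K:ℝ)/δ)⁻¹ := by rw [Real.exp_neg, Real.exp_log (by positivity)]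
          _ = δ / (2*(K:ℝ)) := by rw [inv_div]
      have hsplit : {a : α | t < |Bh k a - μv k|} ⊆
          {a : α | ((nv k : ℕ):ℝ) * t ≤ ∑ i, Y i a} ∪
          {a : α | ((nv k : ℕ):ℝ) * t ≤ ∑ i, -(Y i) a} := by
        intro a ha
        simp only [Set.mem_setOf_eq] at ha
        have hsum : ∑ i : Fin (nv k), Y i a = (nv k : ℝ) * (Bh k a - μv k) := by
          rw [hYdef, hBhdef]
          simp only
          rw [Finset.sum_sub_distrib, Finset.sum_const, Finset.card_univ, Fintype.card_fin,
            Fin.sum_univ_eq_sum_range (fun i => h (X k i a)) (nv k), nsmul_eq_mul]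
          field_simp
        rcases lt_abs.mp ha with hcase | hcase
        · left
          simp only [Set.mem_setOf_eq, hsum]
          exact mul_le_mul_of_nonneg_left hcase.le hnvR.le
        · right
          simp only [Set.mem_setOf_eq, Finset.sum_neg_distrib, hsum]
          have : (nv k:ℝ) * t ≤ (nv k:ℝ) * -(Bh k a - μv k) :=
            mul_le_mul_of_nonneg_left hcase.le hnvR.le
          linarith [this]
      have hδ2K : (0:ℝ) ≤ δ / (2*(K:ℝ)) := by positivity
      calc Pr {a | t < |Bh k a - μv k|}
          ≤ Pr ({a : α | ((nv k : ℕ):ℝ) * t ≤ ∑ i, Y i a} ∪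
              {a : α | ((nv k : ℕ):ℝ) * t ≤ ∑ i, -(Y i) a}) := measure_mono hsplit
        _ ≤ Pr {a : α | ((nv k : ℕ):ℝ) * t ≤ ∑ i, Y i a} +
            Pr {a : α | ((nv k : ℕ):ℝ) * t ≤ ∑ i, -(Y i) a} := measure_union_le _ _
        _ ≤ ENNReal.ofReal (δ / (2*(K:ℝ))) + ENNReal.ofReal (δ / (2*(K:ℝ))) := by
            refine add_le_add ?_ ?_
            · exact (ENNReal.le_ofReal_iff_toReal_le (measure_ne_top _ _) hδ2K).mpr
                (hU.trans hexp)
            · exact (ENNReal.le_ofReal_iff_toReal_le (measure_ne_top _ _) hδ2K).mpr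
                (hV.trans hexp)
        _ = ENNReal.ofReal (δ / K) := by
            rw [← ENNReal.ofReal_add hδ2K hδ2K]
            congr 1
            field_simp
            ring
  -- measurability of events
  have hBhmeas : ∀ k, Measurable (Bh k) := fun k =>
    (Finset.measurable_sum _ (fun i _ => hmeas.comp (hXmeas k i))).const_mul _
  set E : Fin K → Set α := fun k => {a | |Bh k a - μv k| ≤ t} with hEdef
  have hEmeas : ∀ k, MeasurableSet (E k) := fun k =>
    measurableSet_le (((hBhmeas k).sub measurable_const).abs) measurable_const
  -- deterministic inclusion
  have hsub : (⋂ k, E k) ⊆ {a |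
      |(∫ z, hhat a z ∂(pooledDist nv fun k i => X k i a)) -
          ∫ z, h z ∂(∑ k, ENNReal.ofReal (lam k) • Pks k)| ≤
        (⨆ z, |hhat a z - h z|) + (K : ℝ) * C * (⨆ z, |h z|) / Real.sqrt n +
          (hi - lo) * Real.sqrt (Real.log (2 * K / δ) / (2 * lamlow * n))} := by
    intro a ha
    simp only [Set.mem_iInter, hEdef, Set.mem_setOf_eq] at ha
    simp only [Set.mem_setOf_eq]
    rw [← hqdef, ← htdef, ← hMdef]
    set S1 : ℝ := ⨆ z, |hhat a z - h z| with hS1def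
    have hS1 : ∀ z, |hhat a z - h z| ≤ S1 := fun z => le_ciSup (hbdd a) z
    have hS10 : 0 ≤ S1 := le_trans (abs_nonneg _) (hS1 z₀)
    have hP1 : (∫ z, hhat a z ∂(pooledDist nv fun k i => X k i a)) =
        ∑ k, ((nv k : ℝ) / (n:ℝ)) *
          ((nv k : ℝ)⁻¹ * ∑ i ∈ Finset.range (nv k), hhat a (X k i a)) := by
      rw [integral_pooledDist nv (by rw [← hn]; exact hnpos.ne') (fun k => (hnv k).ne') _
        (hhatmeas a), ← hn]
    have hP2 : (∫ z, h z ∂(∑ k, ENNReal.ofReal (lam k) • Pks k)) = ∑ k, lam k * μv k := by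
      rw [integral_finset_sum_measure (fun k _ => (hinth k).smul_measure ENNReal.ofReal_ne_top)]
      exact Finset.sum_congr rfl fun k _ => by
        rw [integral_smul_measure, ENNReal.toReal_ofReal (hlam k).1.le, smul_eq_mul, hμdef]
    rw [hP1, hP2]
    set Ah : Fin K → ℝ :=
      fun k => (nv k : ℝ)⁻¹ * ∑ i ∈ Finset.range (nv k), hhat a (X k i a) with hAhdef
    set w : Fin K → ℝ := fun k => (nv k : ℝ) / (n:ℝ) with hwdef
    have hw0 : ∀ k, 0 ≤ w k := fun k => by positivity
    have hnvR : ∀ k, (0:ℝ) < (nv k : ℝ) := fun k => by exact_mod_cast hnv k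
    have hdiff : ∀ k, |Ah k - Bh k a| ≤ S1 := by
      intro k
      rw [hAhdef, hBhdef]
      simp only
      rw [← mul_sub, ← Finset.sum_sub_distrib, abs_mul, abs_of_nonneg (by positivity :
        (0:ℝ) ≤ (nv k:ℝ)⁻¹)]
      calc (nv k:ℝ)⁻¹ * |∑ i ∈ Finset.range (nv k), (hhat a (X k i a) - h (X k i a))|
          ≤ (nv k:ℝ)⁻¹ * ∑ i ∈ Finset.range (nv k), |hhat a (X k i a) - h (X k i a)| := by
            refine mul_le_mul_of_nonneg_left (Finset.abs_sum_le_sum_abs _ _) (by positivity)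
        _ ≤ (nv k:ℝ)⁻¹ * ∑ _i ∈ Finset.range (nv k), S1 := by
            refine mul_le_mul_of_nonneg_left (Finset.sum_le_sum fun i _ => hS1 _) (by positivity)
        _ = S1 := by
            rw [Finset.sum_const, Finset.card_range, nsmul_eq_mul,
              inv_mul_cancel_left₀ (hnvR k).ne']
    have hBb : ∀ k, |Bh k a| ≤ M := by
      intro k
      rw [hBhdef]
      simp only
      rw [abs_mul, abs_of_nonneg (by positivity : (0:ℝ) ≤ (nv k:ℝ)⁻¹)]
      calc (nv k:ℝ)⁻¹ * |∑ i ∈ Finset.range (nv k), h (X k i a)|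
          ≤ (nv k:ℝ)⁻¹ * ∑ i ∈ Finset.range (nv k), |h (X k i a)| := by
            refine mul_le_mul_of_nonneg_left (Finset.abs_sum_le_sum_abs _ _) (by positivity)
        _ ≤ (nv k:ℝ)⁻¹ * ∑ _i ∈ Finset.range (nv k), M := by
            refine mul_le_mul_of_nonneg_left (Finset.sum_le_sum fun i _ => hM _) (by positivity)
        _ = M := by
            rw [Finset.sum_const, Finset.card_range, nsmul_eq_mul,
              inv_mul_cancel_left₀ (hnvR k).ne']
    have hwsum : ∑ k, w k = 1 := by
      rw [hwdef]
      simp only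
      rw [← Finset.sum_div]
      rw [show ∑ k, ((nv k : ℕ) : ℝ) = (n:ℝ) by rw [hn]; push_cast; rfl]
      field_simp
    calc |∑ k, w k * Ah k - ∑ k, lam k * μv k|
        = |∑ k, (w k * (Ah k - Bh k a) + (w k - lam k) * Bh k a
            + lam k * (Bh k a - μv k))| := by
          rw [← Finset.sum_sub_distrib]
          congr 1
          exact Finset.sum_congr rfl fun k _ => by ring
      _ ≤ ∑ k, |w k * (Ah k - Bh k a) + (w k - lam k) * Bh k a
            + lam k * (Bh k a - μv k)| := Finset.abs_sum_le_sum_abs _ _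
      _ ≤ ∑ k, (w k * S1 + (C / Real.sqrt n) * M + lam k * t) := by
          refine Finset.sum_le_sum fun k _ => ?_
          have h1 : |w k * (Ah k - Bh k a)| ≤ w k * S1 := by
            rw [abs_mul, abs_of_nonneg (hw0 k)]
            exact mul_le_mul_of_nonneg_left (hdiff k) (hw0 k)
          have h2 : |(w k - lam k) * Bh k a| ≤ (C / Real.sqrt n) * M := by
            rw [abs_mul]
            refine mul_le_mul ?_ (hBb k) (abs_nonneg _) (by positivity)
            rw [abs_sub_comm]
            exact hfluct k
          have h3 : |lam k * (Bh k a - μv k)| ≤ lam k * t := by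
            rw [abs_mul, abs_of_nonneg (hlam k).1.le]
            exact mul_le_mul_of_nonneg_left (ha k) (hlam k).1.le
          calc |w k * (Ah k - Bh k a) + (w k - lam k) * Bh k a + lam k * (Bh k a - μv k)|
              ≤ |w k * (Ah k - Bh k a) + (w k - lam k) * Bh k a|
                + |lam k * (Bh k a - μv k)| := abs_add_le _ _
            _ ≤ |w k * (Ah k - Bh k a)| + |(w k - lam k) * Bh k a|
                + |lam k * (Bh k a - μv k)| := by
                  have := abs_add_le (w k * (Ah k - Bh k a)) ((w k - lam k) * Bh k a)
                  linarith
            _ ≤ w k * S1 + (C / Real.sqrt n) * M + lam k * t := by linarith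
      _ = S1 + (K:ℝ) * C * M / Real.sqrt n + t := by
          have eA : ∑ k : Fin K, w k * S1 = S1 := by rw [← Finset.sum_mul, hwsum, one_mul]
          have eB : ∑ _k : Fin K, (C / Real.sqrt n) * M
              = (K:ℝ) * ((C / Real.sqrt n) * M) := by
            rw [Finset.sum_const, Finset.card_univ, Fintype.card_fin, nsmul_eq_mul]
          have eC : ∑ k : Fin K, lam k * t = t := by rw [← Finset.sum_mul, hlamsum, one_mul]
          rw [Finset.sum_add_distrib, Finset.sum_add_distrib, eA, eB, eC]
          ring
  -- union bound and conclusion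
  have hunion : Pr (⋃ k, (E k)ᶜ) ≤ ENNReal.ofReal δ := by
    calc Pr (⋃ k, (E k)ᶜ) ≤ ∑' k, Pr (E k)ᶜ := measure_iUnion_le _
      _ = ∑ k, Pr (E k)ᶜ := tsum_fintype _
      _ ≤ ∑ _k : Fin K, ENNReal.ofReal (δ / K) := by
          refine Finset.sum_le_sum fun k _ => ?_
          have hc : (E k)ᶜ = {a | t < |Bh k a - μv k|} := by
            ext a
            simp [hEdef, not_le]
          rw [hc]
          exact tailk k
      _ = ENNReal.ofReal (∑ _k : Fin K, δ / K) :=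
          (ENNReal.ofReal_sum_of_nonneg (fun _ _ => by positivity)).symm
      _ = ENNReal.ofReal δ := by
          rw [Finset.sum_const, Finset.card_univ, Fintype.card_fin, nsmul_eq_mul]
          congr 1
          field_simp
  calc ENNReal.ofReal (1 - δ) = 1 - ENNReal.ofReal δ := by
        rw [ENNReal.ofReal_sub 1 hδ0.le, ENNReal.ofReal_one]
    _ ≤ 1 - Pr (⋃ k, (E k)ᶜ) := tsub_le_tsub_left hunion 1
    _ = Pr ((⋃ k, (E k)ᶜ)ᶜ) :=
        (prob_compl_eq_one_sub (MeasurableSet.iUnion fun k => (hEmeas k).compl)).symm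
    _ = Pr (⋂ k, E k) := by rw [Set.compl_iUnion]; simp only [compl_compl]
    _ ≤ Pr _ := measure_mono hsub


end SelBias
end
end

section
/- If Assumption (A1) holds, then for every δ ∈ (0,1), with probability at least 1 − δ: ‖D̂'_n(u*) − D̄'(u*)‖ ≤ √K ( √( log(2K²/δ) / (2 λ̲ n) ) + (K+1) C / √n ), where ‖·‖ is the Euclidean norm on ℝ^K and u* is the zero of D̄' normalized by u*_K = log λ_K. -/
open MeasureTheory ProbabilityTheory Real Finset
open scoped ENNReal NNReal

noncomputable section

namespace SelBias

variable {Z : Type*} [MeasurableSpace Z]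

lemma key_ineq {p : ℝ} (hp0 : 0 ≤ p) (hp1 : p ≤ 1) (s : ℝ) :
    1 - p + p * Real.exp s ≤ Real.exp (p * s + s ^ 2 / 8) := by
  have hD : ∀ x : ℝ, 0 < 1 - p + p * Real.exp x := by
    intro x
    rcases eq_or_lt_of_le hp1 with h | h
    · have := Real.exp_pos x; rw [← h]; simp; positivity
    · have := Real.exp_pos x; nlinarith
  set f : ℝ → ℝ := fun x => p * x + x ^ 2 / 8 - Real.log (1 - p + p * Real.exp x) with hf
  set g : ℝ → ℝ := fun x => p + x / 4 - p * Real.exp x / (1 - p + p * Real.exp x) with hg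
  have hDd : ∀ x : ℝ, HasDerivAt (fun y => 1 - p + p * Real.exp y) (p * Real.exp x) x := by
    intro x
    simpa using ((Real.hasDerivAt_exp x).const_mul p).const_add (1 - p)
  have hfd : ∀ x, HasDerivAt f (g x) x := by
    intro x
    have h1 : HasDerivAt (fun y : ℝ => p * y + y ^ 2 / 8) (p + 2 * x / 8) x := by
      have := ((hasDerivAt_pow 2 x).div_const 8)
      exact (((hasDerivAt_id x).const_mul p).add (by simpa [pow_one] using this)).congr_deriv (by simp)
    have h2 := (hDd x).log (hD x).ne'
    have := h1.sub h2
    refine this.congr_deriv ?_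
    rw [hg]; ring
  have hgd : ∀ x, HasDerivAt g
      (1 / 4 - p * Real.exp x * (1 - p) / (1 - p + p * Real.exp x) ^ 2) x := by
    intro x
    have hnum : HasDerivAt (fun y => p * Real.exp y) (p * Real.exp x) x :=
      (Real.hasDerivAt_exp x).const_mul p
    have hq := hnum.div (hDd x) (hD x).ne'
    have h1 : HasDerivAt (fun y : ℝ => p + y / 4) (1 / 4) x := by
      simpa using (hasDerivAt_id x).div_const 4 |>.const_add p
    have := h1.sub hq
    refine this.congr_deriv ?_
    have hDx := (hD x).ne'
    field_simp
    ring
  have hgmono : Monotone g := by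
    refine monotone_of_deriv_nonneg (fun x => (hgd x).differentiableAt) (fun x => ?_)
    rw [(hgd x).deriv]
    have hDx := hD x
    have he := Real.exp_pos x
    rw [sub_nonneg, div_le_iff₀ (by positivity)]
    nlinarith [sq_nonneg (1 - p - p * Real.exp x)]
  have hg0 : g 0 = 0 := by
    simp [hg]
  have hf0 : f 0 = 0 := by
    simp [hf]
  have hfnonneg : ∀ x, 0 ≤ f x := by
    intro x
    rcases le_total 0 x with hx | hx
    · have hmono : MonotoneOn f (Set.Ici 0) := by
        refine monotoneOn_of_deriv_nonneg (convex_Ici 0)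
          (Continuous.continuousOn ?_)
          (fun y _ => (hfd y).differentiableAt.differentiableWithinAt) (fun y hy => ?_)
        · exact continuous_iff_continuousAt.2 fun y => (hfd y).continuousAt
        · rw [(hfd y).deriv, ← hg0]
          exact hgmono (le_of_lt (by simpa using hy))
      have := hmono Set.self_mem_Ici hx hx
      rwa [hf0] at this
    · have hanti : AntitoneOn f (Set.Iic 0) := by
        refine antitoneOn_of_deriv_nonpos (convex_Iic 0)
          (Continuous.continuousOn ?_)
          (fun y _ => (hfd y).differentiableAt.differentiableWithinAt) (fun y hy => ?_)
        · exact continuous_iff_continuousAt.2 fun y => (hfd y).continuousAt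
        · rw [(hfd y).deriv, ← hg0]
          exact hgmono (le_of_lt (by simpa using hy))
      have := hanti hx Set.self_mem_Iic hx
      rwa [hf0] at this
  have hlog : Real.log (1 - p + p * Real.exp s) ≤ p * s + s ^ 2 / 8 := by
    have := hfnonneg s
    rw [hf] at this
    linarith [this]
  calc 1 - p + p * Real.exp s = Real.exp (Real.log (1 - p + p * Real.exp s)) :=
        (Real.exp_log (hD s)).symm
    _ ≤ _ := Real.exp_le_exp.2 hlog

lemma exp_convex_bound {x : ℝ} (h0 : 0 ≤ x) (h1 : x ≤ 1) (s : ℝ) :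
    Real.exp (s * x) ≤ 1 - x + x * Real.exp s := by
  have := convexOn_exp.2 (Set.mem_univ (0:ℝ)) (Set.mem_univ s)
    (by linarith : (0:ℝ) ≤ 1 - x) h0 (by ring)
  simpa [smul_eq_mul, mul_comm] using this

lemma int_of_bdd' {α : Type*} [MeasurableSpace α] (μ : Measure α) [IsFiniteMeasure μ]
    {f : α → ℝ} (hf : Measurable f) {M : ℝ} (hb : ∀ a, |f a| ≤ M) : Integrable f μ :=
  (integrable_const M).mono' hf.aestronglyMeasurable (Filter.Eventually.of_forall hb)

lemma hoeff_mgf_s11 {α : Type*} [MeasurableSpace α] (μ : Measure α) [IsProbabilityMeasure μ]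
    {Y : α → ℝ} (hm : Measurable Y) (h0 : ∀ a, 0 ≤ Y a) (h1 : ∀ a, Y a ≤ 1) (t : ℝ) :
    mgf (fun a => Y a - ∫ x, Y x ∂μ) μ t ≤ Real.exp (t ^ 2 / 8) := by
  set p := ∫ x, Y x ∂μ with hp
  have hYint : Integrable Y μ := int_of_bdd' μ hm (M := 1) (fun a => abs_le.2 ⟨by linarith [h0 a], h1 a⟩)
  have hp0 : 0 ≤ p := integral_nonneg h0
  have hp1 : p ≤ 1 := by
    calc p ≤ ∫ _, (1:ℝ) ∂μ := integral_mono hYint (integrable_const 1) h1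
    _ = 1 := by simp
  have hint : Integrable (fun a => Real.exp (t * Y a)) μ := by
    refine int_of_bdd' μ ((hm.const_mul t).exp) (M := Real.exp |t|) (fun a => ?_)
    rw [abs_of_nonneg (Real.exp_pos _).le]
    refine Real.exp_le_exp.2 ?_
    calc t * Y a ≤ |t * Y a| := le_abs_self _
    _ = |t| * |Y a| := abs_mul _ _
    _ ≤ |t| * 1 := by
        refine mul_le_mul_of_nonneg_left ?_ (abs_nonneg t)
        rw [abs_of_nonneg (h0 a)]; exact h1 a
    _ = |t| := mul_one _
  have key : ∫ a, Real.exp (t * Y a) ∂μ ≤ 1 - p + p * Real.exp t := by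
    have hint2 : Integrable (fun a => 1 - Y a + Y a * Real.exp t) μ := by
      refine Integrable.add ?_ (hYint.mul_const _)
      exact (integrable_const 1).sub hYint
    calc ∫ a, Real.exp (t * Y a) ∂μ ≤ ∫ a, (1 - Y a + Y a * Real.exp t) ∂μ := by
          refine integral_mono hint hint2 (fun a => exp_convex_bound (h0 a) (h1 a) t)
    _ = 1 - p + p * Real.exp t := by
        rw [integral_add (show Integrable (fun a => 1 - Y a) μ from (integrable_const 1).sub hYint) (hYint.mul_const _),
          integral_sub (integrable_const 1) hYint, integral_mul_const]
        simp [hp]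
  have := key_ineq hp0 hp1 t
  calc mgf (fun a => Y a - p) μ t
      = ∫ a, Real.exp (t * Y a) * Real.exp (-(t * p)) ∂μ := by
        unfold mgf
        congr 1; funext a
        rw [← Real.exp_add]; ring_nf
    _ = (∫ a, Real.exp (t * Y a) ∂μ) * Real.exp (-(t * p)) := integral_mul_const _ _
    _ ≤ (1 - p + p * Real.exp t) * Real.exp (-(t * p)) := by
        refine mul_le_mul_of_nonneg_right key (Real.exp_pos _).le
    _ ≤ Real.exp (p * t + t ^ 2 / 8) * Real.exp (-(t * p)) := by
        refine mul_le_mul_of_nonneg_right this (Real.exp_pos _).le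
    _ = Real.exp (t ^ 2 / 8) := by
        rw [← Real.exp_add]; ring_nf

lemma chernoff_two' {α ι : Type*} [MeasurableSpace α] {μ : Measure α} [IsProbabilityMeasure μ]
    (Y : ι → α → ℝ)
    (hindep : iIndepFun Y μ)
    (hmeas : ∀ p, Measurable (Y p)) (h0 : ∀ p a, 0 ≤ Y p a) (h1 : ∀ p a, Y p a ≤ 1)
    (s : Finset ι) {ε : ℝ} (hε : 0 ≤ ε) :
    μ {a | (s.card : ℝ) * ε < |∑ p ∈ s, (Y p a - ∫ x, Y p x ∂μ)|} ≤
      ENNReal.ofReal (2 * Real.exp (-2 * s.card * ε ^ 2)) := by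
  classical
  set Yc : ι → α → ℝ := fun p a => Y p a - ∫ x, Y p x ∂μ with hYc
  have hicomp : iIndepFun Yc μ := by
    have := hindep.comp (fun p (x : ℝ) => x - ∫ x, Y p x ∂μ)
      (fun p => measurable_id.sub_const _)
    exact this
  have hYcmeas : ∀ p, Measurable (Yc p) := fun p => (hmeas p).sub_const _
  have hEY : ∀ p, 0 ≤ (∫ x, Y p x ∂μ) ∧ (∫ x, Y p x ∂μ) ≤ 1 := by
    intro p
    have hi : Integrable (Y p) μ :=
      int_of_bdd' μ (hmeas p) (M := 1) (fun a => abs_le.2 ⟨by linarith [h0 p a], h1 p a⟩)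
    constructor
    · exact integral_nonneg (h0 p)
    · calc ∫ x, Y p x ∂μ ≤ ∫ _, (1:ℝ) ∂μ := integral_mono hi (integrable_const 1) (h1 p)
      _ = 1 := by simp
  have hYcbd : ∀ p a, |Yc p a| ≤ 1 := by
    intro p a
    have h := hEY p
    have he : Yc p a = Y p a - ∫ x, Y p x ∂μ := rfl
    rw [he, abs_le]
    exact ⟨by linarith [h0 p a, h.2], by linarith [h1 p a, h.1]⟩
  set S : α → ℝ := fun a => ∑ p ∈ s, Yc p a with hS
  have hsumeq : (∑ p ∈ s, Yc p) = S := by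
    funext a; simp [hS]
  have hSmeas : Measurable S := by
    rw [hS]; exact Finset.measurable_sum s (fun p _ => hYcmeas p)
  have hSbd : ∀ a, |S a| ≤ (s.card : ℝ) := by
    intro a
    calc |S a| ≤ ∑ p ∈ s, |Yc p a| := Finset.abs_sum_le_sum_abs _ _
    _ ≤ ∑ _p ∈ s, (1:ℝ) := Finset.sum_le_sum (fun p _ => hYcbd p a)
    _ = s.card := by simp
  have hmgfS : ∀ t : ℝ, mgf S μ t ≤ Real.exp ((s.card : ℝ) * (t ^ 2 / 8)) := by
    intro t
    rw [← hsumeq, hicomp.mgf_sum hYcmeas s]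
    calc ∏ p ∈ s, mgf (Yc p) μ t ≤ ∏ _p ∈ s, Real.exp (t ^ 2 / 8) := by
          refine Finset.prod_le_prod (fun p _ => mgf_nonneg) (fun p _ => ?_)
          exact hoeff_mgf_s11 μ (hmeas p) (h0 p) (h1 p) t
    _ = Real.exp ((s.card : ℝ) * (t ^ 2 / 8)) := by
        rw [Finset.prod_const, ← Real.exp_nat_mul]
  have hint : ∀ t : ℝ, Integrable (fun a => Real.exp (t * S a)) μ := by
    intro t
    refine int_of_bdd' μ ((hSmeas.const_mul t).exp) (M := Real.exp (|t| * s.card)) (fun a => ?_)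
    rw [abs_of_nonneg (Real.exp_pos _).le]
    refine Real.exp_le_exp.2 ?_
    calc t * S a ≤ |t * S a| := le_abs_self _
    _ = |t| * |S a| := abs_mul _ _
    _ ≤ |t| * s.card := mul_le_mul_of_nonneg_left (hSbd a) (abs_nonneg t)
  have hbound : Real.exp (-(4 * ε) * ((s.card : ℝ) * ε)) *
      Real.exp ((s.card : ℝ) * ((4 * ε) ^ 2 / 8)) = Real.exp (-2 * s.card * ε ^ 2) := by
    rw [← Real.exp_add]; ring_nf
  have hup : μ {a | (s.card : ℝ) * ε ≤ S a} ≤ ENNReal.ofReal (Real.exp (-2 * s.card * ε ^ 2)) := by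
    rw [ENNReal.le_ofReal_iff_toReal_le (measure_ne_top _ _) (Real.exp_pos _).le]
    calc (μ {a | (s.card : ℝ) * ε ≤ S a}).toReal
        ≤ Real.exp (-(4 * ε) * ((s.card : ℝ) * ε)) * mgf S μ (4 * ε) :=
          measure_ge_le_exp_mul_mgf _ (by positivity) (hint _)
    _ ≤ Real.exp (-(4 * ε) * ((s.card : ℝ) * ε)) * Real.exp ((s.card : ℝ) * ((4 * ε) ^ 2 / 8)) :=
          mul_le_mul_of_nonneg_left (hmgfS _) (Real.exp_pos _).le
    _ = _ := hbound
  have hlo : μ {a | S a ≤ -((s.card : ℝ) * ε)} ≤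
      ENNReal.ofReal (Real.exp (-2 * s.card * ε ^ 2)) := by
    rw [ENNReal.le_ofReal_iff_toReal_le (measure_ne_top _ _) (Real.exp_pos _).le]
    calc (μ {a | S a ≤ -((s.card : ℝ) * ε)}).toReal
        ≤ Real.exp (-(-(4 * ε)) * (-((s.card : ℝ) * ε))) * mgf S μ (-(4 * ε)) :=
          measure_le_le_exp_mul_mgf _ (by simpa using hε) (hint _)
    _ ≤ Real.exp (-(-(4 * ε)) * (-((s.card : ℝ) * ε))) *
          Real.exp ((s.card : ℝ) * ((-(4 * ε)) ^ 2 / 8)) :=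
          mul_le_mul_of_nonneg_left (hmgfS _) (Real.exp_pos _).le
    _ = Real.exp (-2 * s.card * ε ^ 2) := by rw [← Real.exp_add]; ring_nf
  have hsub : {a | (s.card : ℝ) * ε < |S a|} ⊆
      {a | (s.card : ℝ) * ε ≤ S a} ∪ {a | S a ≤ -((s.card : ℝ) * ε)} := by
    intro a ha
    simp only [Set.mem_setOf_eq] at ha
    have hSa : S a = ∑ p ∈ s, (Y p a - ∫ x, Y p x ∂μ) := rfl
    simp only [Set.mem_union, Set.mem_setOf_eq, hSa]
    rcases lt_abs.mp ha with h | h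
    · exact Or.inl h.le
    · exact Or.inr (by linarith)
  calc μ {a | (s.card : ℝ) * ε < |∑ p ∈ s, (Y p a - ∫ x, Y p x ∂μ)|}
      ≤ μ ({a | (s.card : ℝ) * ε ≤ S a} ∪ {a | S a ≤ -((s.card : ℝ) * ε)}) :=
        measure_mono hsub
    _ ≤ μ {a | (s.card : ℝ) * ε ≤ S a} + μ {a | S a ≤ -((s.card : ℝ) * ε)} :=
        measure_union_le _ _
    _ ≤ ENNReal.ofReal (Real.exp (-2 * s.card * ε ^ 2)) +
        ENNReal.ofReal (Real.exp (-2 * s.card * ε ^ 2)) := add_le_add hup hlo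
    _ = ENNReal.ofReal (2 * Real.exp (-2 * s.card * ε ^ 2)) := by
        rw [← ENNReal.ofReal_add (Real.exp_pos _).le (Real.exp_pos _).le]
        ring_nf

/-- Deviation bound for the empirical gradient at the true optimum `u*`. -/
theorem gradient_deviation_at_ustar
    {q : ℕ} {Zs : Set (EuclideanSpace ℝ (Fin q))} (hZs : MeasurableSet Zs)
    {K : ℕ} (hK : 0 < K)
    (P : Measure ↥Zs) [IsProbabilityMeasure P]
    (ω : Fin K → ↥Zs → ℝ)
    (hωmeas : ∀ k, Measurable (ω k)) (hωnn : ∀ k z, 0 ≤ ω k z)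
    (hωint : ∀ k, Integrable (ω k) P)
    (hOmpos : ∀ k, 0 < Om ω P k)
    (lam : Fin K → ℝ) (hlam : ∀ k, lam k ∈ Set.Ioo (0:ℝ) 1) (hlamsum : ∑ k, lam k = 1)
    (C lamlow lammin : ℝ) (hC : 0 ≤ C) (hlamlow : 0 < lamlow) (hlammin : 0 < lammin)
    (hlammin' : ∀ k, lammin ≤ lam k)
    {α : Type} [MeasurableSpace α] (Pr : Measure α) [IsProbabilityMeasure Pr]
    (nv : Fin K → ℕ) (n : ℕ) (hn : n = ∑ k, nv k) (hnv : ∀ k, 0 < nv k)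
    (X : Fin K → ℕ → α → ↥Zs)
    (hXmeas : ∀ k i, Measurable (X k i))
    (hXlaw : ∀ k, ∀ i < nv k, Measure.map (X k i) Pr = Pk ω P k)
    (hXindep : iIndepFun
      (fun (p : Σ k : Fin K, Fin (nv k)) => fun a => X p.1 p.2 a) Pr)
    (hfluct : ∀ k, |lam k - (nv k : ℝ) / n| ≤ C / Real.sqrt n)
    (hlow : ∀ k, lamlow ≤ (nv k : ℝ) / n)
    (ustar : Fin K → ℝ)
    (hnorm : ustar ⟨K - 1, Nat.sub_lt hK one_pos⟩ =
      Real.log (lam ⟨K - 1, Nat.sub_lt hK one_pos⟩))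
    (hzero : ∀ l, Dp ω lam (Pbar ω P lam) ustar l = 0)
    (δ : ℝ) (hδ : δ ∈ Set.Ioo (0:ℝ) 1) :
    ENNReal.ofReal (1 - δ) ≤
      Pr {a |
        eNorm (fun l =>
            Dp ω (fun k => (nv k : ℝ) / n) (pooledDist nv fun k i => X k i a) ustar l -
            Dp ω lam (Pbar ω P lam) ustar l) ≤
          Real.sqrt K * (Real.sqrt (Real.log (2 * (K : ℝ) ^ 2 / δ) / (2 * lamlow * n)) +
            ((K : ℝ) + 1) * C / Real.sqrt n)} := by
  classical
  obtain ⟨hδ0, hδ1⟩ := hδ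
  have hKfin : Nonempty (Fin K) := ⟨⟨0, hK⟩⟩
  have hnpos : 0 < n := by
    rw [hn]; exact Finset.sum_pos (fun k _ => hnv k) Finset.univ_nonempty
  have hnR : (0:ℝ) < n := by exact_mod_cast hnpos
  have hKR : (0:ℝ) < K := by exact_mod_cast hK
  -- the bounded integrand
  set g : Fin K → ↥Zs → ℝ :=
    fun l z => Real.exp (ustar l) * ω l z / (∑ k, Real.exp (ustar k) * ω k z) with hgdef
  have hgmeas : ∀ l, Measurable (g l) := by
    intro l
    exact ((hωmeas l).const_mul _).div (Finset.measurable_sum _ fun k _ => (hωmeas k).const_mul _)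
  have hterm : ∀ (k : Fin K) z, 0 ≤ Real.exp (ustar k) * ω k z :=
    fun k z => mul_nonneg (Real.exp_pos _).le (hωnn k z)
  have hg0 : ∀ l z, 0 ≤ g l z := by
    intro l z
    exact div_nonneg (hterm l z) (Finset.sum_nonneg fun k _ => hterm k z)
  have hg1 : ∀ l z, g l z ≤ 1 := by
    intro l z
    refine div_le_one_of_le₀ ?_ (Finset.sum_nonneg fun k _ => hterm k z)
    exact Finset.single_le_sum (f := fun k => Real.exp (ustar k) * ω k z)
      (fun k _ => hterm k z) (Finset.mem_univ l)
  have hgabs : ∀ l z, |g l z| ≤ 1 := fun l z => abs_le.2 ⟨by linarith [hg0 l z], hg1 l z⟩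
  -- P_k is a probability measure
  have hPkprob : ∀ k, IsProbabilityMeasure (Pk ω P k) := by
    intro k
    constructor
    rw [Pk, withDensity_apply _ MeasurableSet.univ, setLIntegral_univ,
      ← ofReal_integral_eq_lintegral_ofReal ((hωint k).div_const _)
        (Filter.Eventually.of_forall fun z => div_nonneg (hωnn k z) (hOmpos k).le),
      integral_div]
    rw [show (∫ z, ω k z ∂P) = Om ω P k from rfl, div_self (hOmpos k).ne']
    simp
  -- the means
  set mv : Fin K → Fin K → ℝ := fun k l => ∫ z, g l z ∂(Pk ω P k) with hmv
  have hm0 : ∀ k l, 0 ≤ mv k l := fun k l => integral_nonneg (hg0 l)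
  have hm1 : ∀ k l, mv k l ≤ 1 := by
    intro k l
    haveI := hPkprob k
    calc mv k l ≤ ∫ _, (1:ℝ) ∂(Pk ω P k) :=
          integral_mono (int_of_bdd' _ (hgmeas l) (hgabs l)) (integrable_const 1) (hg1 l)
    _ = 1 := by simp
  -- identity for the population gradient
  have hDbar : ∀ l, Dp ω lam (Pbar ω P lam) ustar l = (∑ k, lam k * mv k l) - lam l := by
    intro l
    have hint : ∀ k : Fin K, k ∈ Finset.univ →
        Integrable (g l) (ENNReal.ofReal (lam k) • Pk ω P k) := by
      intro k _
      haveI := hPkprob k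
      refine (integrable_smul_measure ?_ ENNReal.ofReal_ne_top).2
        (int_of_bdd' _ (hgmeas l) (hgabs l))
      simp only [ne_eq, ENNReal.ofReal_eq_zero, not_le]
      exact (hlam k).1
    have hI : (∫ z, g l z ∂(Pbar ω P lam)) = ∑ k, lam k * mv k l := by
      rw [Pbar, integral_finset_sum_measure hint]
      refine Finset.sum_congr rfl fun k _ => ?_
      rw [integral_smul_measure, ENNReal.toReal_ofReal (hlam k).1.le, smul_eq_mul, hmv]
    show (∫ z, g l z ∂(Pbar ω P lam)) - lam l = _
    rw [hI]
  -- identity for the empirical gradient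
  have hDemp : ∀ (a : α) l,
      Dp ω (fun k => (nv k : ℝ) / n) (pooledDist nv fun k i => X k i a) ustar l =
      (∑ k, ((nv k : ℝ) / n) *
        ((nv k : ℝ)⁻¹ * ∑ i ∈ Finset.range (nv k), g l (X k i a))) - (nv l : ℝ) / n := by
    intro a l
    have hdint : ∀ (k : Fin K) (i : ℕ), i ∈ Finset.range (nv k) →
        Integrable (g l) (Measure.dirac (X k i a)) :=
      fun k i _ => int_of_bdd' _ (hgmeas l) (hgabs l)
    have hempint : ∀ k : Fin K, Integrable (g l) (empDist (nv k) (fun i => X k i a)) := by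
      intro k
      rw [empDist]
      refine (integrable_smul_measure ?_ ?_).2 (integrable_finset_sum_measure.2 (hdint k))
      · simp [(hnv k).ne']
      · simp [(hnv k).ne']
    have hemp : ∀ k : Fin K, (∫ z, g l z ∂(empDist (nv k) (fun i => X k i a))) =
        (nv k : ℝ)⁻¹ * ∑ i ∈ Finset.range (nv k), g l (X k i a) := by
      intro k
      rw [empDist, integral_smul_measure, integral_finset_sum_measure (hdint k),
        ENNReal.toReal_inv, ENNReal.toReal_natCast, smul_eq_mul]
      congr 1
      exact Finset.sum_congr rfl fun i _ => integral_dirac' _ _ (hgmeas l).stronglyMeasurable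
    have hint2 : ∀ k : Fin K, k ∈ Finset.univ → Integrable (g l)
        (((nv k : ℝ≥0∞) / ((∑ j : Fin K, nv j : ℕ) : ℝ≥0∞)) • empDist (nv k) (fun i => X k i a)) := by
      intro k _
      refine (integrable_smul_measure ?_ ?_).2 (hempint k)
      · refine ENNReal.div_ne_zero.2 ⟨by simp [(hnv k).ne'], by simp⟩
      · refine ne_of_lt (ENNReal.div_lt_top (by simp) ?_)
        simp only [ne_eq, Nat.cast_eq_zero, ← hn]
        exact hnpos.ne'
    have hI : (∫ z, g l z ∂(pooledDist nv (fun k i => X k i a))) =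
        ∑ k, ((nv k : ℝ) / n) * ((nv k : ℝ)⁻¹ * ∑ i ∈ Finset.range (nv k), g l (X k i a)) := by
      rw [pooledDist, integral_finset_sum_measure hint2]
      refine Finset.sum_congr rfl fun k _ => ?_
      rw [integral_smul_measure, hemp k, smul_eq_mul, ENNReal.toReal_div,
        ENNReal.toReal_natCast, ENNReal.toReal_natCast]
      rw [show ((∑ j : Fin K, nv j : ℕ) : ℝ) = (n : ℝ) by rw [← hn]]
    show (∫ z, g l z ∂(pooledDist nv (fun k i => X k i a))) - (nv l : ℝ) / n = _
    rw [hI]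
  -- deviation threshold
  set t : ℝ := Real.sqrt (Real.log (2 * (K : ℝ) ^ 2 / δ) / (2 * lamlow * n)) with ht
  have hlogpos : 0 ≤ Real.log (2 * (K : ℝ) ^ 2 / δ) := by
    refine Real.log_nonneg ?_
    rw [le_div_iff₀ hδ0]
    have : (1:ℝ) ≤ K := by exact_mod_cast hK
    nlinarith
  have ht0 : 0 ≤ t := Real.sqrt_nonneg _
  have ht2 : t ^ 2 = Real.log (2 * (K : ℝ) ^ 2 / δ) / (2 * lamlow * n) :=
    Real.sq_sqrt (div_nonneg hlogpos (by positivity))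
  -- the bad events
  set B : Fin K → Fin K → Set α := fun k l =>
    {a | (nv k : ℝ) * t < |∑ i : Fin (nv k), (g l (X k (i : ℕ) a) - mv k l)|} with hB
  have hBmeas : ∀ k l, MeasurableSet (B k l) := by
    intro k l
    have hF : Measurable (fun a => ∑ i : Fin (nv k), (g l (X k (i : ℕ) a) - mv k l)) :=
      Finset.measurable_sum _ fun i _ => ((hgmeas l).comp (hXmeas k i)).sub_const _
    exact measurableSet_lt measurable_const hF.abs
  have hBbound : ∀ k l, Pr (B k l) ≤ ENNReal.ofReal (δ / (K : ℝ) ^ 2) := by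
    intro k l
    have hYindep : iIndepFun
        (fun (p : Σ k, Fin (nv k)) a => g l (X p.1 (p.2 : ℕ) a)) Pr := by
      have := hXindep.comp (fun _ => g l) (fun _ => hgmeas l)
      exact this
    have hmean : ∀ (i : Fin (nv k)), (∫ x, g l (X k (i : ℕ) x) ∂Pr) = mv k l := by
      intro i
      show (∫ x, g l (X k (i : ℕ) x) ∂Pr) = ∫ z, g l z ∂(Pk ω P k)
      rw [← hXlaw k i i.isLt,
        integral_map (hXmeas k i).aemeasurable (hgmeas l).aestronglyMeasurable]
    have h2 := chernoff_two' (μ := Pr) (fun (p : Σ k, Fin (nv k)) a => g l (X p.1 (p.2 : ℕ) a))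
      hYindep (fun p => (hgmeas l).comp (hXmeas p.1 p.2))
      (fun p a => hg0 l _) (fun p a => hg1 l _)
      (Finset.univ.map (Function.Embedding.sigmaMk k)) ht0
    have hset : {a | (((Finset.univ.map
          (Function.Embedding.sigmaMk (β := fun k => Fin (nv k)) k)).card : ℝ)) * t <
          |∑ p ∈ Finset.univ.map (Function.Embedding.sigmaMk (β := fun k => Fin (nv k)) k),
            (g l (X p.1 (p.2 : ℕ) a) - ∫ x, g l (X p.1 (p.2 : ℕ) x) ∂Pr)|} = B k l := by
      ext a
      simp only [Set.mem_setOf_eq, hB, Finset.sum_map, Function.Embedding.sigmaMk_apply,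
        Finset.card_map, Finset.card_univ, Fintype.card_fin, hmean]
      exact Iff.of_eq (by
        congr 2
        exact Finset.sum_congr rfl fun i _ =>
          (show g l (X k (i : ℕ) a) - ∫ x, g l (X k (i : ℕ) x) ∂Pr = g l (X k (i : ℕ) a) - mv k l by
            rw [hmean i]))
    rw [hset] at h2
    simp only [Finset.card_map, Finset.card_univ, Fintype.card_fin] at h2
    refine h2.trans (ENNReal.ofReal_le_ofReal ?_)
    -- tail computation
    have hc : (0:ℝ) < 2 * lamlow * n := by positivity
    have hnk : lamlow * (n : ℝ) ≤ (nv k : ℝ) := by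
      have := hlow k
      rwa [le_div_iff₀ hnR] at this
    have harg : Real.log (2 * (K : ℝ) ^ 2 / δ) ≤ 2 * (nv k : ℝ) * t ^ 2 := by
      have h1 : (2 * lamlow * (n : ℝ)) * (Real.log (2 * (K : ℝ) ^ 2 / δ) / (2 * lamlow * n)) ≤
          (2 * (nv k : ℝ)) * (Real.log (2 * (K : ℝ) ^ 2 / δ) / (2 * lamlow * n)) :=
        mul_le_mul_of_nonneg_right (by linarith) (div_nonneg hlogpos hc.le)
      rw [mul_div_cancel₀ _ hc.ne'] at h1
      rw [ht2]
      nlinarith [h1]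
    have hexp : Real.exp (-2 * (nv k : ℝ) * t ^ 2) ≤ δ / (2 * (K : ℝ) ^ 2) := by
      calc Real.exp (-2 * (nv k : ℝ) * t ^ 2) = Real.exp (-(2 * (nv k : ℝ) * t ^ 2)) := by
            ring_nf
      _ ≤ Real.exp (-(Real.log (2 * (K : ℝ) ^ 2 / δ))) := Real.exp_le_exp.2 (neg_le_neg harg)
      _ = (2 * (K : ℝ) ^ 2 / δ)⁻¹ := by
            rw [Real.exp_neg, Real.exp_log (by positivity)]
      _ = δ / (2 * (K : ℝ) ^ 2) := by rw [inv_div]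
    calc 2 * Real.exp (-2 * (nv k : ℝ) * t ^ 2) ≤ 2 * (δ / (2 * (K : ℝ) ^ 2)) := by linarith
    _ = δ / (K : ℝ) ^ 2 := by field_simp
  set Bad : Set α := ⋃ k, ⋃ l, B k l with hBad
  have hBadmeas : MeasurableSet Bad :=
    MeasurableSet.iUnion fun k => MeasurableSet.iUnion fun l => hBmeas k l
  have hBadbound : Pr Bad ≤ ENNReal.ofReal δ := by
    calc Pr Bad ≤ ∑ k, Pr (⋃ l, B k l) := measure_iUnion_fintype_le _ _
    _ ≤ ∑ k, ∑ l, Pr (B k l) :=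
        Finset.sum_le_sum fun k _ => measure_iUnion_fintype_le _ _
    _ ≤ ∑ _k : Fin K, ∑ _l : Fin K, ENNReal.ofReal (δ / (K : ℝ) ^ 2) :=
        Finset.sum_le_sum fun k _ => Finset.sum_le_sum fun l _ => hBbound k l
    _ = ENNReal.ofReal δ := by
        simp only [Finset.sum_const, Finset.card_univ, Fintype.card_fin, nsmul_eq_mul]
        rw [show ((K : ℕ) : ℝ≥0∞) = ENNReal.ofReal (K : ℝ) from (ENNReal.ofReal_natCast K).symm,
          ← ENNReal.ofReal_mul (by positivity), ← ENNReal.ofReal_mul (by positivity)]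
        congr 1
        field_simp
  -- the good event implies the bound
  have hGood : Badᶜ ⊆ {a |
      eNorm (fun l =>
          Dp ω (fun k => (nv k : ℝ) / n) (pooledDist nv fun k i => X k i a) ustar l -
          Dp ω lam (Pbar ω P lam) ustar l) ≤
        Real.sqrt K * (Real.sqrt (Real.log (2 * (K : ℝ) ^ 2 / δ) / (2 * lamlow * n)) +
          ((K : ℝ) + 1) * C / Real.sqrt n)} := by
    intro a ha
    simp only [Set.mem_compl_iff, hBad, Set.mem_iUnion, not_exists] at ha
    have hdev : ∀ k l : Fin K,
        |∑ i : Fin (nv k), (g l (X k (i : ℕ) a) - mv k l)| ≤ (nv k : ℝ) * t := by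
      intro k l
      have h := ha k l
      simp only [hB, Set.mem_setOf_eq, not_lt] at h
      exact h
    have hAvdev : ∀ k l : Fin K,
        |(nv k : ℝ)⁻¹ * (∑ i ∈ Finset.range (nv k), g l (X k i a)) - mv k l| ≤ t := by
      intro k l
      have hnvR : (0 : ℝ) < nv k := by exact_mod_cast hnv k
      have hsum : ∑ i : Fin (nv k), (g l (X k (i : ℕ) a) - mv k l) =
          (∑ i ∈ Finset.range (nv k), g l (X k i a)) - (nv k : ℝ) * mv k l := by
        rw [Finset.sum_sub_distrib, Fin.sum_univ_eq_sum_range (fun i => g l (X k i a))]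
        simp [Finset.sum_const, Finset.card_univ, mul_comm]
      have heq : (nv k : ℝ)⁻¹ * (∑ i ∈ Finset.range (nv k), g l (X k i a)) - mv k l =
          (nv k : ℝ)⁻¹ * ∑ i : Fin (nv k), (g l (X k (i : ℕ) a) - mv k l) := by
        rw [hsum]
        field_simp
      rw [heq, abs_mul, abs_of_nonneg (inv_nonneg.2 hnvR.le)]
      calc (nv k : ℝ)⁻¹ * |∑ i : Fin (nv k), (g l (X k (i : ℕ) a) - mv k l)| ≤
          (nv k : ℝ)⁻¹ * ((nv k : ℝ) * t) :=
            mul_le_mul_of_nonneg_left (hdev k l) (inv_nonneg.2 hnvR.le)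
      _ = t := by field_simp
    have hlamh0 : ∀ k : Fin K, (0 : ℝ) ≤ (nv k : ℝ) / n := fun k => by positivity
    have hlamhsum : ∑ k : Fin K, (nv k : ℝ) / n = 1 := by
      rw [← Finset.sum_div]
      rw [show ∑ k : Fin K, ((nv k : ℕ) : ℝ) = (n : ℝ) by rw [hn]; push_cast; ring]
      exact div_self hnR.ne'
    have hcoord : ∀ l : Fin K,
        |Dp ω (fun k => (nv k : ℝ) / n) (pooledDist nv fun k i => X k i a) ustar l -
          Dp ω lam (Pbar ω P lam) ustar l| ≤ t + ((K : ℝ) + 1) * C / Real.sqrt n := by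
      intro l
      rw [hDemp a l, hDbar l]
      have hsplit : (∑ k, ((nv k : ℝ) / n) *
            ((nv k : ℝ)⁻¹ * ∑ i ∈ Finset.range (nv k), g l (X k i a))) - (nv l : ℝ) / n -
          ((∑ k, lam k * mv k l) - lam l) =
          (∑ k, ((nv k : ℝ) / n) *
              (((nv k : ℝ)⁻¹ * ∑ i ∈ Finset.range (nv k), g l (X k i a)) - mv k l)) +
            (∑ k, (((nv k : ℝ) / n) - lam k) * mv k l) + (lam l - (nv l : ℝ) / n) := by
        rw [← Finset.sum_add_distrib]
        have hcomb : ∑ x : Fin K, (((nv x : ℝ) / n) *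
              (((nv x : ℝ)⁻¹ * ∑ i ∈ Finset.range (nv x), g l (X x i a)) - mv x l) +
            (((nv x : ℝ) / n) - lam x) * mv x l) =
            (∑ k, ((nv k : ℝ) / n) * ((nv k : ℝ)⁻¹ * ∑ i ∈ Finset.range (nv k), g l (X k i a))) -
            ∑ k, lam k * mv k l := by
          rw [← Finset.sum_sub_distrib]
          exact Finset.sum_congr rfl fun k _ => by ring
        rw [hcomb]
        ring
      rw [hsplit]
      have habs1 : |∑ k, ((nv k : ℝ) / n) *
          (((nv k : ℝ)⁻¹ * ∑ i ∈ Finset.range (nv k), g l (X k i a)) - mv k l)| ≤ t := by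
        calc _ ≤ ∑ k, |((nv k : ℝ) / n) *
            (((nv k : ℝ)⁻¹ * ∑ i ∈ Finset.range (nv k), g l (X k i a)) - mv k l)| :=
              Finset.abs_sum_le_sum_abs _ _
        _ ≤ ∑ k, ((nv k : ℝ) / n) * t := by
            refine Finset.sum_le_sum fun k _ => ?_
            rw [abs_mul, abs_of_nonneg (hlamh0 k)]
            exact mul_le_mul_of_nonneg_left (hAvdev k l) (hlamh0 k)
        _ = t := by rw [← Finset.sum_mul, hlamhsum, one_mul]
      have habs2 : |∑ k, (((nv k : ℝ) / n) - lam k) * mv k l| ≤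
          (K : ℝ) * (C / Real.sqrt n) := by
        calc _ ≤ ∑ k, |(((nv k : ℝ) / n) - lam k) * mv k l| := Finset.abs_sum_le_sum_abs _ _
        _ ≤ ∑ _k : Fin K, (C / Real.sqrt n) * 1 := by
            refine Finset.sum_le_sum fun k _ => ?_
            rw [abs_mul]
            refine mul_le_mul ?_ (abs_le.2 ⟨by linarith [hm0 k l], hm1 k l⟩)
              (abs_nonneg _) (by positivity)
            rw [abs_sub_comm]
            exact hfluct k
        _ = (K : ℝ) * (C / Real.sqrt n) := by simp [mul_comm]
      have habs3 : |lam l - (nv l : ℝ) / n| ≤ C / Real.sqrt n := hfluct l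
      have hKC : (K : ℝ) * (C / Real.sqrt n) + C / Real.sqrt n =
          ((K : ℝ) + 1) * C / Real.sqrt n := by ring
      calc |_ + _ + (lam l - (nv l : ℝ) / n)| ≤ _ := abs_add_le _ _
      _ ≤ (|_| + |_|) + _ := add_le_add (abs_add_le _ _) habs3
      _ ≤ (t + (K : ℝ) * (C / Real.sqrt n)) + C / Real.sqrt n :=
          add_le_add (add_le_add habs1 habs2) le_rfl
      _ = t + ((K : ℝ) + 1) * C / Real.sqrt n := by rw [add_assoc, hKC]
    -- conclude via the Euclidean norm
    have hBd0 : 0 ≤ t + ((K : ℝ) + 1) * C / Real.sqrt n := by positivity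
    show eNorm _ ≤ _
    rw [eNorm]
    calc Real.sqrt (∑ l, (Dp ω (fun k => (nv k : ℝ) / n)
            (pooledDist nv fun k i => X k i a) ustar l -
          Dp ω lam (Pbar ω P lam) ustar l) ^ 2) ≤
        Real.sqrt (∑ _l : Fin K, (t + ((K : ℝ) + 1) * C / Real.sqrt n) ^ 2) := by
          refine Real.sqrt_le_sqrt (Finset.sum_le_sum fun l _ => ?_)
          rw [← sq_abs]
          exact pow_le_pow_left₀ (abs_nonneg _) (hcoord l) 2
    _ = Real.sqrt ((K : ℝ) * (t + ((K : ℝ) + 1) * C / Real.sqrt n) ^ 2) := by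
        simp [Finset.sum_const, Finset.card_univ, mul_comm]
    _ = Real.sqrt K * (t + ((K : ℝ) + 1) * C / Real.sqrt n) := by
        rw [Real.sqrt_mul (by positivity), Real.sqrt_sq hBd0]
  calc ENNReal.ofReal (1 - δ) = 1 - ENNReal.ofReal δ := by
        rw [ENNReal.ofReal_sub _ hδ0.le, ENNReal.ofReal_one]
    _ ≤ 1 - Pr Bad := tsub_le_tsub_left hBadbound 1
    _ = Pr Badᶜ := (prob_compl_eq_one_sub hBadmeas).symm
    _ ≤ _ := measure_mono hGood

end SelBias
end
end

section
/- Let λ, λ̂ ∈ (0,1)^K with Σ_k λ_k = Σ_k λ̂_k = 1, λ_k ≥ λ_min, λ̂_k ≥ λ̲ and |λ̂_k − λ_k| ≤ C/√n for all k, and let W, Ŵ ∈ [B', B]^K with 0 < B' ≤ B. Suppose 0 < m ≤ max_k ω_k(z) and max_k ω_k(z) ≤ M for all z. Then, with λ̲̲ = min{λ̲, λ_min}, for every z ∈ Z: | (Σ_{k=1}^K λ̂_k ω_k(z)/Ŵ_k)^{−1} − (Σ_{k=1}^K λ_k ω_k(z)/W_k)^{−1} | ≤ M (B/(m λ̲̲))²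 ( K C/(B' √n) + (1/B'²) Σ_{k=1}^K λ_k |Ŵ_k − W_k| ). -/
open MeasureTheory ProbabilityTheory Real Finset
open scoped ENNReal NNReal

noncomputable section

namespace SelBias

variable {Z : Type*} [MeasurableSpace Z]

/-- Deterministic pointwise stability bound for the reciprocal debiasing weights. -/
theorem pointwise_weight_stability
    {q : ℕ} {Zs : Set (EuclideanSpace ℝ (Fin q))} (hZs : MeasurableSet Zs)
    {K : ℕ} (hK : 0 < K)
    (ω : Fin K → ↥Zs → ℝ) (hωnn : ∀ k z, 0 ≤ ω k z)
    (m M : ℝ) (hm : 0 < m) (hmlow : ∀ z, ∃ k, m ≤ ω k z) (hMup : ∀ k z, ω k z ≤ M)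
    (n : ℕ) (hn : 0 < n) (C lamlow lammin : ℝ) (hC : 0 ≤ C)
    (hlamlow : 0 < lamlow) (hlammin : 0 < lammin)
    (lam lamhat : Fin K → ℝ)
    (hlam : ∀ k, lam k ∈ Set.Ioo (0:ℝ) 1) (hlamsum : ∑ k, lam k = 1)
    (hlamhat : ∀ k, lamhat k ∈ Set.Ioo (0:ℝ) 1) (hlamhatsum : ∑ k, lamhat k = 1)
    (hlmin : ∀ k, lammin ≤ lam k) (hlhat : ∀ k, lamlow ≤ lamhat k)
    (hfluct : ∀ k, |lamhat k - lam k| ≤ C / Real.sqrt n)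
    (B B' : ℝ) (hB' : 0 < B') (hB'B : B' ≤ B)
    (W What : Fin K → ℝ)
    (hWB : ∀ k, W k ∈ Set.Icc B' B) (hWhB : ∀ k, What k ∈ Set.Icc B' B) :
    ∀ z : ↥Zs,
      |(∑ k, lamhat k * ω k z / What k)⁻¹ - (∑ k, lam k * ω k z / W k)⁻¹| ≤
        M * (B / (m * min lamlow lammin)) ^ 2 *
          ((K : ℝ) * C / (B' * Real.sqrt n) +
            (1 / B' ^ 2) * ∑ k, lam k * |What k - W k|) := by
  intro z
  obtain ⟨k0, hk0⟩ := hmlow z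
  have hB : (0:ℝ) < B := hB'.trans_le hB'B
  have hc : (0:ℝ) < min lamlow lammin := lt_min hlamlow hlammin
  have hM : (0:ℝ) < M := hm.trans_le (hk0.trans (hMup k0 z))
  have hsn : (0:ℝ) < Real.sqrt n := Real.sqrt_pos.2 (by exact_mod_cast hn)
  set c := min lamlow lammin with hcdef
  have hShat_nonneg : ∀ k ∈ Finset.univ, (0:ℝ) ≤ lamhat k * ω k z / What k := fun k _ =>
    div_nonneg (mul_nonneg (hlamhat k).1.le (hωnn k z)) ((hB'.trans_le (hWhB k).1).le)
  have hT_nonneg : ∀ k ∈ Finset.univ, (0:ℝ) ≤ lam k * ω k z / W k := fun k _ =>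
    div_nonneg (mul_nonneg (hlam k).1.le (hωnn k z)) ((hB'.trans_le (hWB k).1).le)
  have ha : (0:ℝ) < m * c / B := by positivity
  have hSge : m * c / B ≤ ∑ k, lamhat k * ω k z / What k := by
    have h1 : m * c / B ≤ lamhat k0 * ω k0 z / What k0 := by
      apply div_le_div₀ (mul_nonneg (hlamhat k0).1.le (hωnn k0 z)) ?_
        (hB'.trans_le (hWhB k0).1) (hWhB k0).2
      have h2 : c ≤ lamhat k0 := (min_le_left _ _).trans (hlhat k0)
      nlinarith [hk0, hc, hm]
    exact h1.trans (Finset.single_le_sum hShat_nonneg (Finset.mem_univ k0))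
  have hTge : m * c / B ≤ ∑ k, lam k * ω k z / W k := by
    have h1 : m * c / B ≤ lam k0 * ω k0 z / W k0 := by
      apply div_le_div₀ (mul_nonneg (hlam k0).1.le (hωnn k0 z)) ?_
        (hB'.trans_le (hWB k0).1) (hWB k0).2
      have h2 : c ≤ lam k0 := (min_le_right _ _).trans (hlmin k0)
      nlinarith [hk0, hc, hm]
    exact h1.trans (Finset.single_le_sum hT_nonneg (Finset.mem_univ k0))
  set S := ∑ k, lamhat k * ω k z / What k with hSdef
  set T := ∑ k, lam k * ω k z / W k with hTdef
  have hS0 : 0 < S := ha.trans_le hSge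
  have hT0 : 0 < T := ha.trans_le hTge
  -- Step 1: |S⁻¹ - T⁻¹| ≤ (B/(m*c))^2 * |T - S|
  have step1 : |S⁻¹ - T⁻¹| ≤ (B / (m * c)) ^ 2 * |T - S| := by
    have hid : S⁻¹ - T⁻¹ = (T - S) / (S * T) := inv_sub_inv hS0.ne' hT0.ne'
    rw [hid, abs_div, abs_of_pos (mul_pos hS0 hT0)]
    have hST : (m * c / B) ^ 2 ≤ S * T := by nlinarith
    have h2 : |T - S| / (S * T) ≤ |T - S| / (m * c / B) ^ 2 :=
      div_le_div_of_nonneg_left (abs_nonneg _) (by positivity) hST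
    refine h2.trans (le_of_eq ?_)
    field_simp
  -- Step 2: per-term bound
  have hterm : ∀ k : Fin K,
      |lam k * ω k z / W k - lamhat k * ω k z / What k| ≤
        M * (C / (B' * Real.sqrt n)) + M * (lam k * |What k - W k|) / B' ^ 2 := by
    intro k
    have hW1 := hB'.trans_le (hWB k).1
    have hW2 := hB'.trans_le (hWhB k).1
    have hid : lam k * ω k z / W k - lamhat k * ω k z / What k =
        ω k z * ((lam k - lamhat k) / What k + lam k * (What k - W k) / (W k * What k)) := by
      field_simp
      ring
    rw [hid, abs_mul, abs_of_nonneg (hωnn k z)]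
    have hb1 : |(lam k - lamhat k) / What k| ≤ C / (B' * Real.sqrt n) := by
      rw [abs_div, abs_of_pos hW2]
      have h3 : |lam k - lamhat k| ≤ C / Real.sqrt n := by
        rw [abs_sub_comm]; exact hfluct k
      calc |lam k - lamhat k| / What k ≤ (C / Real.sqrt n) / B' :=
            div_le_div₀ (by positivity) h3 hB' (hWhB k).1
        _ = C / (B' * Real.sqrt n) := by rw [div_div, mul_comm]
    have hb2 : |lam k * (What k - W k) / (W k * What k)| ≤ lam k * |What k - W k| / B' ^ 2 := by
      rw [abs_div, abs_of_pos (mul_pos hW1 hW2), abs_mul, abs_of_pos (hlam k).1]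
      apply div_le_div₀ (mul_nonneg (hlam k).1.le (abs_nonneg _)) le_rfl (by positivity)
      calc B' ^ 2 = B' * B' := sq B'
        _ ≤ W k * What k := mul_le_mul (hWB k).1 (hWhB k).1 hB'.le hW1.le
    calc ω k z * |(lam k - lamhat k) / What k + lam k * (What k - W k) / (W k * What k)|
        ≤ M * (|(lam k - lamhat k) / What k| + |lam k * (What k - W k) / (W k * What k)|) := by
          apply mul_le_mul (hMup k z) (abs_add_le _ _) (abs_nonneg _) hM.le
      _ ≤ M * (C / (B' * Real.sqrt n) + lam k * |What k - W k| / B' ^ 2) := by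
          apply mul_le_mul_of_nonneg_left (add_le_add hb1 hb2) hM.le
      _ = M * (C / (B' * Real.sqrt n)) + M * (lam k * |What k - W k|) / B' ^ 2 := by ring
  -- Step 3: sum the per-term bounds
  have step2 : |T - S| ≤
      M * ((K : ℝ) * C / (B' * Real.sqrt n) + (1 / B' ^ 2) * ∑ k, lam k * |What k - W k|) := by
    have h1 : T - S = ∑ k, (lam k * ω k z / W k - lamhat k * ω k z / What k) := by
      rw [hTdef, hSdef, ← Finset.sum_sub_distrib]
    rw [h1]
    calc |∑ k, (lam k * ω k z / W k - lamhat k * ω k z / What k)|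
        ≤ ∑ k, |lam k * ω k z / W k - lamhat k * ω k z / What k| :=
          Finset.abs_sum_le_sum_abs _ _
      _ ≤ ∑ k : Fin K, (M * (C / (B' * Real.sqrt n)) + M * (lam k * |What k - W k|) / B' ^ 2) :=
          Finset.sum_le_sum fun k _ => hterm k
      _ = M * ((K : ℝ) * C / (B' * Real.sqrt n) + (1 / B' ^ 2) * ∑ k, lam k * |What k - W k|) := by
          rw [Finset.sum_add_distrib, Finset.sum_const, Finset.card_univ, Fintype.card_fin,
            ← Finset.sum_div, ← Finset.mul_sum]
          push_cast
          field_simp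
          have e : Real.sqrt (n:ℝ) * (Real.sqrt (n:ℝ))⁻¹ = 1 := mul_inv_cancel₀ hsn.ne'
          have e2 : B' * B'⁻¹ = 1 := mul_inv_cancel₀ hB'.ne'
          linear_combination (B' * M * C * (K:ℝ) * (B' * B'⁻¹)) * e + (B' * M * C * (K:ℝ)) * e2
  calc |S⁻¹ - T⁻¹| ≤ (B / (m * c)) ^ 2 * |T - S| := step1
    _ ≤ (B / (m * c)) ^ 2 *
        (M * ((K : ℝ) * C / (B' * Real.sqrt n) + (1 / B' ^ 2) * ∑ k, lam k * |What k - W k|)) :=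
        mul_le_mul_of_nonneg_left step2 (by positivity)
    _ = M * (B / (m * c)) ^ 2 *
        ((K : ℝ) * C / (B' * Real.sqrt n) + (1 / B' ^ 2) * ∑ k, lam k * |What k - W k|) := by
        ring

end SelBias
end
end
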